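/- arXiv:2407.19076 — 6 statements merged into one kernel-verified Lean document; each statement's English description precedes it below -/
import Mathlib

section
/- For every prime number p, Serre's vertical Sato–Tate measure μ_p has total mass 1; that is, ∫_{-2}^{2} ((p+1)/π) · √(1 − t²/4) / ((p^{1/2} + p^{-1/2})² − t²) dt = 1. -/
open Real

private lemma serre_aux (a b x sx s4 : ℝ) (hsx : 0 < sx) (hs4 : 0 < s4) (ha0 : 0 < a)
    (e1 : sx ^ 2 = a^2 - x^2) (e2 : s4 ^ 2 = 4 - x^2) (hab : a ^ 2 - b ^ 2 = 4) :
    Real.sqrt (1 - x ^ 2 / 4) / (a ^ 2 - x ^ 2) =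
    (1/2) * ((1 / (s4/2) * (1/2)) -
          (b/a) * (1 / (a * s4 / (2 * sx)) *
            ((b * (2 * sx) - b * x * (2 * (-(2*x) / (2 * sx)))) / (2 * sx)^2))) := by
  have hsx' : sx ≠ 0 := ne_of_gt hsx
  have hs4' : s4 ≠ 0 := ne_of_gt hs4
  have ha' : a ≠ 0 := ne_of_gt ha0
  have hsq3 : Real.sqrt (1 - x^2/4) = s4 / 2 := by
    rw [show (1 - x^2/4) = (4 - x^2) / 2^2 by ring, ← e2, Real.sqrt_div (by positivity),
      Real.sqrt_sq hs4.le, Real.sqrt_sq (by norm_num : (0:ℝ) ≤ 2)]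
  have hgd : (b * (2 * sx) - b * x * (2 * (-(2*x) / (2 * sx)))) / (2 * sx)^2
      = b * a^2 / (2 * sx^3) := by
    field_simp
    linear_combination b * e1
  rw [hsq3, hgd, ← e1]
  field_simp
  linear_combination e2 - e1 - hab

private lemma serre_core (s : ℝ) (hs : 1 < s) :
    ∫ t in (-2:ℝ)..2, Real.sqrt (1 - t ^ 2 / 4) / ((s + s⁻¹) ^ 2 - t ^ 2)
      = π / (s ^ 2 + 1) := by
  have hs0 : (0:ℝ) < s := lt_trans one_pos hs
  have hinv : s⁻¹ * s = 1 := inv_mul_cancel₀ (ne_of_gt hs0)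
  set a := s + s⁻¹ with ha
  set b := s - s⁻¹ with hb
  have hbpos : 0 < b := by
    rw [hb, sub_pos, inv_lt_iff_one_lt_mul₀ hs0]; nlinarith
  have ha2 : 2 < a := by rw [ha]; nlinarith
  have ha0 : 0 < a := by linarith
  have hab : a ^ 2 - b ^ 2 = 4 := by rw [ha, hb]; nlinarith
  clear_value a b
  set F : ℝ → ℝ := fun t =>
    (1/2) * (arcsin (t/2) - (b/a) * arcsin (b * t / (2 * Real.sqrt (a^2 - t^2)))) with hF
  have hdenpos : ∀ t ∈ Set.Icc (-2:ℝ) 2, 0 < a^2 - t^2 := by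
    intro t ht
    have h1 := ht.1; have h2 := ht.2
    nlinarith
  have hcontF : ContinuousOn F (Set.Icc (-2:ℝ) 2) := by
    apply ContinuousOn.mul continuousOn_const
    apply ContinuousOn.sub
    · exact (Real.continuous_arcsin.comp (continuous_id.div_const 2)).continuousOn
    · apply ContinuousOn.mul continuousOn_const
      apply Real.continuous_arcsin.comp_continuousOn
      apply ContinuousOn.div
      · exact (continuous_const.mul continuous_id).continuousOn
      · exact (continuous_const.mul
          ((continuous_const.sub (continuous_pow 2)).sqrt)).continuousOn
      · intro t ht
        have h := hdenpos t ht
        have : 0 < Real.sqrt (a^2 - t^2) := Real.sqrt_pos.mpr h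
        positivity
  have hint : IntervalIntegrable
      (fun t => Real.sqrt (1 - t ^ 2 / 4) / (a ^ 2 - t ^ 2)) MeasureTheory.volume (-2) 2 := by
    apply ContinuousOn.intervalIntegrable
    rw [Set.uIcc_of_le (by norm_num : (-2:ℝ) ≤ 2)]
    apply ContinuousOn.div
    · exact ((continuous_const.sub ((continuous_pow 2).div_const 4)).sqrt).continuousOn
    · exact (continuous_const.sub (continuous_pow 2)).continuousOn
    · exact fun t ht => ne_of_gt (hdenpos t ht)
  have hderiv : ∀ x ∈ Set.Ioo (-2:ℝ) 2,
      HasDerivAt F (Real.sqrt (1 - x ^ 2 / 4) / (a ^ 2 - x ^ 2)) x := by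
    intro x hx
    have hx1 := hx.1; have hx2 := hx.2
    have hax : 0 < a^2 - x^2 := hdenpos x ⟨le_of_lt hx1, le_of_lt hx2⟩
    have h4x : 0 < 4 - x^2 := by nlinarith
    have e1 : Real.sqrt (a^2 - x^2) ^ 2 = a^2 - x^2 := Real.sq_sqrt hax.le
    have e2 : Real.sqrt (4 - x^2) ^ 2 = 4 - x^2 := Real.sq_sqrt h4x.le
    have hsx : 0 < Real.sqrt (a^2 - x^2) := Real.sqrt_pos.mpr hax
    have hs4 : 0 < Real.sqrt (4 - x^2) := Real.sqrt_pos.mpr h4x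
    set sx := Real.sqrt (a^2 - x^2) with hsxd
    set s4 := Real.sqrt (4 - x^2) with hs4d
    have h1g : 1 - (b * x / (2 * sx))^2 = (a * s4 / (2 * sx))^2 := by
      have hsx' : sx ≠ 0 := ne_of_gt hsx
      field_simp
      linear_combination (b^2*x^2 - a^2*s4^2 + 4 - 2*a^2*x^2 + 4*x^2 + 4*a^2) * e1 + (a^2*sx^2 + x^2*a^2 - a^2 - a^4) * e2 + (sx^2*x^2 + x^2 - a^2*x^2 + x^4) * hab
    have h1gpos : 0 < 1 - (b * x / (2 * sx))^2 := by
      rw [h1g]; positivity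
    have hg1 : b * x / (2 * sx) ≠ -1 := by
      intro h; rw [h] at h1gpos; norm_num at h1gpos
    have hg2 : b * x / (2 * sx) ≠ 1 := by
      intro h; rw [h] at h1gpos; norm_num at h1gpos
    have hx2' : x / 2 ≠ -1 := by intro h; nlinarith [div_eq_iff (two_ne_zero (α := ℝ)) |>.mp h]
    have hx2'' : x / 2 ≠ 1 := by intro h; nlinarith [div_eq_iff (two_ne_zero (α := ℝ)) |>.mp h]
    have d1 : HasDerivAt (fun t : ℝ => a^2 - t^2) (-(2*x)) x := by
      simpa using (hasDerivAt_pow 2 x).const_sub (a^2)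
    have d2 : HasDerivAt (fun t : ℝ => Real.sqrt (a^2 - t^2)) (-(2*x) / (2 * sx)) x :=
      d1.sqrt (ne_of_gt hax)
    have dnum : HasDerivAt (fun t : ℝ => b * t) b x := by
      simpa using (hasDerivAt_id x).const_mul b
    have dden : HasDerivAt (fun t : ℝ => 2 * Real.sqrt (a^2 - t^2)) (2 * (-(2*x) / (2 * sx))) x :=
      d2.const_mul 2
    have d3 : HasDerivAt (fun t : ℝ => b * t / (2 * Real.sqrt (a^2 - t^2)))
        ((b * (2 * sx) - b * x * (2 * (-(2*x) / (2 * sx)))) / (2 * sx)^2) x :=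
      dnum.div dden (by positivity)
    have d4 : HasDerivAt (fun t : ℝ => arcsin (b * t / (2 * Real.sqrt (a^2 - t^2))))
        (1 / Real.sqrt (1 - (b * x / (2 * sx))^2) *
          ((b * (2 * sx) - b * x * (2 * (-(2*x) / (2 * sx)))) / (2 * sx)^2)) x :=
      HasDerivAt.comp (h₂ := arcsin) x (Real.hasDerivAt_arcsin hg1 hg2) d3
    have d5 : HasDerivAt (fun t : ℝ => arcsin (t / 2))
        (1 / Real.sqrt (1 - (x/2)^2) * (1/2)) x := by
      have := HasDerivAt.comp (h₂ := arcsin) x (Real.hasDerivAt_arcsin hx2' hx2'') ((hasDerivAt_id x).div_const 2)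
      exact this
    have dF : HasDerivAt F
        ((1/2) * ((1 / Real.sqrt (1 - (x/2)^2) * (1/2)) -
          (b/a) * (1 / Real.sqrt (1 - (b * x / (2 * sx))^2) *
            ((b * (2 * sx) - b * x * (2 * (-(2*x) / (2 * sx)))) / (2 * sx)^2)))) x :=
      ((d5.sub ((d4.const_mul (b/a)))).const_mul (1/2))
    have hsq1 : Real.sqrt (1 - (x/2)^2) = s4 / 2 := by
      rw [show (1 - (x/2)^2) = (4 - x^2) / 2^2 by ring, ← e2, Real.sqrt_div (by positivity),
        Real.sqrt_sq hs4.le, Real.sqrt_sq (by norm_num : (0:ℝ) ≤ 2)]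
    have hsq2 : Real.sqrt (1 - (b * x / (2 * sx))^2) = a * s4 / (2 * sx) := by
      rw [h1g, Real.sqrt_sq (by positivity)]
    rw [hsq1, hsq2] at dF
    have heq := serre_aux a b x sx s4 hsx hs4 ha0 e1 e2 hab
    rw [heq]
    exact dF
  have key : ∫ t in (-2:ℝ)..2, Real.sqrt (1 - t ^ 2 / 4) / (a ^ 2 - t ^ 2)
      = F 2 - F (-2) := by
    apply intervalIntegral.integral_eq_sub_of_hasDeriv_right_of_le (by norm_num) hcontF
      (fun x hx => (hderiv x hx).hasDerivWithinAt) hint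
  have hsab : Real.sqrt (a^2 - 2^2) = b := by
    rw [show a^2 - 2^2 = b^2 by nlinarith, Real.sqrt_sq hbpos.le]
  have hF2 : F 2 = (1/2) * (π/2 - (b/a) * (π/2)) := by
    rw [hF]
    simp only
    rw [hsab, show b * 2 / (2 * b) = 1 by field_simp, show (2:ℝ)/2 = 1 by norm_num,
      Real.arcsin_one]
  have hFm2 : F (-2) = (1/2) * (-(π/2) - (b/a) * (-(π/2))) := by
    rw [hF]
    simp only
    rw [show a^2 - (-2:ℝ)^2 = a^2 - 2^2 by ring, hsab,
      show b * (-2) / (2 * b) = -1 by field_simp,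
      show (-2:ℝ)/2 = -1 by norm_num, Real.arcsin_neg_one]
  rw [key, hF2, hFm2]
  rw [ha, hb]
  have h1 : s^2 + 1 ≠ 0 := by positivity
  field_simp
  ring

/-- For every prime `p`, Serre's vertical Sato–Tate measure `μ_p` has total mass `1`. -/
theorem serre_measure_total_mass (p : ℕ) (hp : p.Prime) :
    ∫ t in (-2:ℝ)..2,
      (((p : ℝ) + 1) / π) *
        (Real.sqrt (1 - t ^ 2 / 4) /
          (((p : ℝ) ^ ((1 : ℝ) / 2) + (p : ℝ) ^ (-(1 : ℝ) / 2)) ^ 2 - t ^ 2))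
      = 1 := by
  have hp2 : (2:ℝ) ≤ (p:ℝ) := by exact_mod_cast hp.two_le
  have hp0 : (0:ℝ) ≤ (p:ℝ) := by linarith
  have hrw1 : (p:ℝ) ^ ((1:ℝ)/2) = Real.sqrt p := (Real.sqrt_eq_rpow _).symm
  have hrw2 : (p:ℝ) ^ (-(1:ℝ)/2) = (Real.sqrt p)⁻¹ := by
    rw [show (-(1:ℝ)/2) = -(1/2) by ring, Real.rpow_neg hp0, ← Real.sqrt_eq_rpow]
  have hs : 1 < Real.sqrt p := by
    rw [show (1:ℝ) = Real.sqrt 1 by simp]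
    exact Real.sqrt_lt_sqrt (by norm_num) (by linarith)
  have hsq : Real.sqrt p ^ 2 = (p:ℝ) := Real.sq_sqrt hp0
  rw [intervalIntegral.integral_const_mul]
  simp_rw [hrw1, hrw2]
  rw [serre_core (Real.sqrt p) hs, hsq]
  have hπ : π ≠ 0 := Real.pi_ne_zero
  have hp1 : (p:ℝ) + 1 ≠ 0 := by positivity
  field_simp
end

section
/- For a real number r > 0, the r-th absolute moment of the Sato–Tate measure equals the r-th absolute moment of the CM measure if and only if r = 2; that is, (1/π) ∫_{-2}^{2} |t|^r · √(1 − t²/4) dt = (1/(4π)) ∫_{-2}^{2} |t|^r / √(1 − t²/4) dt holds if and only if r = 2. -/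
open Real

open MeasureTheory intervalIntegral

lemma sqrt_fact {t : ℝ} (ht : t ∈ Set.Icc (-2:ℝ) 2) :
    Real.sqrt (1 - t^2/4) = Real.sqrt (2 - t) * Real.sqrt (2 + t) / 2 := by
  rw [← Real.sqrt_mul (by nlinarith [ht.2] : (0:ℝ) ≤ 2 - t)]
  rw [show (2-t)*(2+t) = 4 * (1 - t^2/4) by ring, Real.sqrt_mul (by norm_num) ]
  rw [show Real.sqrt 4 = 2 by rw [show (4:ℝ) = 2^2 by norm_num, Real.sqrt_sq (by norm_num)]]
  ring

lemma integrable_half (s : ℝ) (hs : 0 ≤ s) :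
    IntervalIntegrable (fun t => |t| ^ s / Real.sqrt (1 - t^2/4)) volume 0 2 := by
  have hmaj : IntervalIntegrable (fun t => 2^(s+1) * (2 - t) ^ (-(1/2) : ℝ)) volume 0 2 := by
    have h := (intervalIntegral.intervalIntegrable_rpow' (a := 0) (b := 2)
      (r := (-(1/2):ℝ)) (by norm_num)).comp_sub_left 2
    simpa using (h.symm.const_mul (2^(s+1)))
  rw [intervalIntegrable_iff_integrableOn_Ioc_of_le (by norm_num)] at hmaj ⊢
  refine hmaj.mono' ?_ ?_
  · apply Measurable.aestronglyMeasurable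
    exact ((measurable_abs.pow_const s).div ((measurable_const.sub
      ((measurable_id.pow_const 2).div_const 4)).sqrt))
  · rw [ae_restrict_iff' measurableSet_Ioc]
    filter_upwards with t ht
    have h0 : 0 < t := ht.1
    have h2 : t ≤ 2 := ht.2
    have hnn : (0:ℝ) ≤ |t| ^ s / Real.sqrt (1 - t^2/4) :=
      div_nonneg (Real.rpow_nonneg (abs_nonneg t) s) (Real.sqrt_nonneg _)
    rw [Real.norm_of_nonneg hnn]
    have habs : |t| ^ s ≤ 2 ^ s := by
      apply Real.rpow_le_rpow (abs_nonneg t) _ hs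
      rw [abs_of_pos h0]; exact h2
    have hsq : Real.sqrt (1 - t^2/4) = Real.sqrt (2-t) * Real.sqrt (2+t) / 2 :=
      sqrt_fact ⟨by linarith, h2⟩
    rw [hsq, Real.rpow_neg (by linarith), ← Real.sqrt_eq_rpow]
    rcases eq_or_lt_of_le h2 with rfl | hlt
    · simp
    · have hpos : 0 < Real.sqrt (2 - t) := Real.sqrt_pos.2 (by linarith)
      have hpos2 : (1:ℝ) ≤ Real.sqrt (2 + t) := by
        rw [show (1:ℝ) = Real.sqrt 1 by simp]
        exact Real.sqrt_le_sqrt (by linarith)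
      rw [div_div_eq_mul_div, div_le_iff₀ (by positivity)]
      have key : 2^(s+1) * (Real.sqrt (2-t))⁻¹ * (Real.sqrt (2-t) * Real.sqrt (2+t))
          = 2^s * Real.sqrt (2+t) * 2 := by
        rw [Real.rpow_add (by norm_num : (0:ℝ) < 2), Real.rpow_one]
        field_simp
      rw [key]
      nlinarith [Real.rpow_nonneg (show (0:ℝ) ≤ 2 by norm_num) s,
        Real.rpow_nonneg (abs_nonneg t) s]

lemma integrable_sing (s : ℝ) (hs : 0 ≤ s) :
    IntervalIntegrable (fun t => |t| ^ s / Real.sqrt (1 - t^2/4)) volume (-2) 2 := by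
  have h1 := integrable_half s hs
  have h2 : IntervalIntegrable (fun t => |t| ^ s / Real.sqrt (1 - t^2/4)) volume (-2) 0 := by
    have := (integrable_half s hs).comp_sub_left 0
    simp only [zero_sub, sub_zero] at this
    have heq : (fun x => |(-x)| ^ s / Real.sqrt (1 - (-x)^2/4))
        = (fun t => |t| ^ s / Real.sqrt (1 - t^2/4)) := by
      funext x; rw [abs_neg, neg_pow]; norm_num
    rw [heq] at this
    exact this.symm
  exact h2.trans h1

lemma cont_g1 (s : ℝ) (hs : 0 ≤ s) :
    Continuous (fun t : ℝ => |t| ^ s * Real.sqrt (1 - t^2/4)) := by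
  exact (continuous_abs.rpow_const (fun x => Or.inr hs)).mul
    ((continuous_const.sub ((continuous_pow 2).div_const 4)).sqrt)

lemma cont_F (r : ℝ) (hr : 0 ≤ r) :
    Continuous (fun t : ℝ => t * |t| ^ r * Real.sqrt (1 - t^2/4)) := by
  exact (continuous_id.mul (continuous_abs.rpow_const (fun x => Or.inr hr))).mul
    ((continuous_const.sub ((continuous_pow 2).div_const 4)).sqrt)

lemma deriv_F (r : ℝ) (hr : 0 < r) {t : ℝ} (ht : t ∈ Set.Ioo (-2:ℝ) 2) (ht0 : t ≠ 0) :
    HasDerivAt (fun t : ℝ => t * |t| ^ r * Real.sqrt (1 - t^2/4))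
      ((r+1) * (|t| ^ r * Real.sqrt (1 - t^2/4))
        - (1/4) * (|t| ^ (r+2) / Real.sqrt (1 - t^2/4))) t := by
  have hu : (0:ℝ) < 1 - t^2/4 := by nlinarith [ht.1, ht.2]
  have habs : (0:ℝ) < |t| := abs_pos.2 ht0
  -- derivative of sqrt part
  have hS : HasDerivAt (fun t : ℝ => Real.sqrt (1 - t^2/4))
      (1 / (2 * Real.sqrt (1 - t^2/4)) * (-t/2)) t := by
    have hinner : HasDerivAt (fun t : ℝ => 1 - t^2/4) (-t/2) t := by
      have := ((hasDerivAt_pow 2 t).div_const 4).const_sub 1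
      exact this.congr_deriv (by ring)
    exact (Real.hasDerivAt_sqrt hu.ne').comp t hinner
  -- derivative of t * |t|^r
  have hG : HasDerivAt (fun t : ℝ => t * |t| ^ r) ((r+1) * |t| ^ r) t := by
    rcases ht0.lt_or_gt with hneg | hpos
    · have h1 : HasDerivAt (fun x : ℝ => -((-x) ^ (r+1))) ((r+1) * (-t) ^ r) t := by
        have h2 : HasDerivAt (fun x : ℝ => x ^ (r+1)) ((r+1) * (-t) ^ (r+1-1)) (-t) :=
          Real.hasDerivAt_rpow_const (Or.inl (by linarith : -t ≠ 0))
        have h3 := (h2.comp t (hasDerivAt_neg t)).neg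
        refine h3.congr_deriv ?_
        rw [show r + 1 - 1 = r by ring]; ring
      have heq : (fun x : ℝ => x * |x| ^ r) =ᶠ[nhds t] (fun x : ℝ => -((-x) ^ (r+1))) := by
        filter_upwards [Iio_mem_nhds hneg] with x hx
        rw [Set.mem_Iio] at hx
        rw [abs_of_neg hx, Real.rpow_add (by linarith : (0:ℝ) < -x), Real.rpow_one]
        ring
      rw [abs_of_neg hneg]
      exact h1.congr_of_eventuallyEq heq
    · have h1 : HasDerivAt (fun x : ℝ => x ^ (r+1)) ((r+1) * t ^ r) t := by
        have h2 : HasDerivAt (fun x : ℝ => x ^ (r+1)) ((r+1) * t ^ (r+1-1)) t :=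
          Real.hasDerivAt_rpow_const (Or.inl hpos.ne')
        rwa [show r + 1 - 1 = r by ring] at h2
      have heq : (fun x : ℝ => x * |x| ^ r) =ᶠ[nhds t] (fun x : ℝ => x ^ (r+1)) := by
        filter_upwards [Ioi_mem_nhds hpos] with x hx
        rw [Set.mem_Ioi] at hx
        rw [abs_of_pos hx, Real.rpow_add hx, Real.rpow_one]
        ring
      rw [abs_of_pos hpos]
      exact h1.congr_of_eventuallyEq heq
  have := hG.mul hS
  refine this.congr_deriv ?_
  have hsq : Real.sqrt (1 - t^2/4) > 0 := Real.sqrt_pos.2 hu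
  have hsqsq : Real.sqrt (1 - t^2/4) * Real.sqrt (1 - t^2/4) = 1 - t^2/4 :=
    Real.mul_self_sqrt hu.le
  have hpow : |t| ^ (r+2) = |t| ^ r * t^2 := by
    rw [Real.rpow_add habs, show ((2:ℝ)) = ((2:ℕ):ℝ) by norm_num, Real.rpow_natCast, sq_abs]
  rw [hpow]
  field_simp
  ring

lemma ftc_key (r : ℝ) (hr : 0 < r) :
    (r+1) * (∫ t in (-2:ℝ)..2, |t| ^ r * Real.sqrt (1 - t^2/4))
      = (1/4) * ∫ t in (-2:ℝ)..2, |t| ^ (r+2) / Real.sqrt (1 - t^2/4) := by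
  set φ : ℝ → ℝ := fun t => (r+1) * (|t| ^ r * Real.sqrt (1 - t^2/4))
    - (1/4) * (|t| ^ (r+2) / Real.sqrt (1 - t^2/4)) with hφ
  have hint1 : IntervalIntegrable (fun t => |t| ^ r * Real.sqrt (1 - t^2/4)) volume (-2) 2 :=
    (cont_g1 r hr.le).intervalIntegrable _ _
  have hint2 : IntervalIntegrable (fun t => |t| ^ (r+2) / Real.sqrt (1 - t^2/4)) volume (-2) 2 :=
    integrable_sing (r+2) (by linarith)
  have hintφ : IntervalIntegrable φ volume (-2) 2 :=
    (hint1.const_mul _).sub (hint2.const_mul _)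
  set F : ℝ → ℝ := fun t => t * |t| ^ r * Real.sqrt (1 - t^2/4) with hF
  have hcont : Continuous F := cont_F r hr.le
  have hsub1 : Set.uIcc (-2:ℝ) 0 ⊆ Set.uIcc (-2:ℝ) 2 := by
    apply Set.uIcc_subset_uIcc <;> simp [Set.mem_uIcc] <;> norm_num
  have hsub2 : Set.uIcc (0:ℝ) 2 ⊆ Set.uIcc (-2:ℝ) 2 := by
    apply Set.uIcc_subset_uIcc <;> simp [Set.mem_uIcc] <;> norm_num
  have h1 : ∫ t in (-2:ℝ)..0, φ t = F 0 - F (-2) := by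
    apply intervalIntegral.integral_eq_sub_of_hasDerivAt_of_le (by norm_num)
      hcont.continuousOn
    · intro x hx
      exact deriv_F r hr ⟨hx.1, by linarith [hx.2]⟩ (ne_of_lt hx.2)
    · exact hintφ.mono_set hsub1
  have h2 : ∫ t in (0:ℝ)..2, φ t = F 2 - F 0 := by
    apply intervalIntegral.integral_eq_sub_of_hasDerivAt_of_le (by norm_num)
      hcont.continuousOn
    · intro x hx
      exact deriv_F r hr ⟨by linarith [hx.1], hx.2⟩ (ne_of_gt hx.1)
    · exact hintφ.mono_set hsub2
  have hsum : ∫ t in (-2:ℝ)..2, φ t = F 2 - F (-2) := by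
    rw [← intervalIntegral.integral_add_adjacent_intervals
      (hintφ.mono_set hsub1) (hintφ.mono_set hsub2), h1, h2]
    ring
  have hF2 : F 2 = 0 := by
    simp only [hF]
    norm_num
  have hFm2 : F (-2) = 0 := by
    simp only [hF]
    norm_num
  have hzero : ∫ t in (-2:ℝ)..2, φ t = 0 := by rw [hsum, hF2, hFm2]; ring
  have hsplit : ∫ t in (-2:ℝ)..2, φ t
      = (r+1) * (∫ t in (-2:ℝ)..2, |t| ^ r * Real.sqrt (1 - t^2/4))
        - (1/4) * ∫ t in (-2:ℝ)..2, |t| ^ (r+2) / Real.sqrt (1 - t^2/4) := by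
    rw [hφ, intervalIntegral.integral_sub (hint1.const_mul _) (hint2.const_mul _),
      intervalIntegral.integral_const_mul, intervalIntegral.integral_const_mul]
  linarith [hsplit ▸ hzero]

lemma A_pos (r : ℝ) (hr : 0 < r) :
    0 < ∫ t in (-2:ℝ)..2, |t| ^ r * Real.sqrt (1 - t^2/4) := by
  have hc := cont_g1 r hr.le
  have hnn : ∀ t : ℝ, 0 ≤ |t| ^ r * Real.sqrt (1 - t^2/4) := fun t =>
    mul_nonneg (Real.rpow_nonneg (abs_nonneg t) r) (Real.sqrt_nonneg _)
  have hseg : (0:ℝ) < ∫ t in (0:ℝ)..1, |t| ^ r * Real.sqrt (1 - t^2/4) := by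
    apply intervalIntegral.intervalIntegral_pos_of_pos_on (hc.intervalIntegrable _ _)
    · intro x hx
      have h1 : 0 < |x| := abs_pos.2 (ne_of_gt hx.1)
      have h2 : 0 < 1 - x^2/4 := by nlinarith [hx.1, hx.2]
      exact mul_pos (Real.rpow_pos_of_pos h1 r) (Real.sqrt_pos.2 h2)
    · norm_num
  have e1 : ∫ t in (-2:ℝ)..2, |t| ^ r * Real.sqrt (1 - t^2/4)
      = (∫ t in (-2:ℝ)..0, |t| ^ r * Real.sqrt (1 - t^2/4))
        + (∫ t in (0:ℝ)..1, |t| ^ r * Real.sqrt (1 - t^2/4))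
        + (∫ t in (1:ℝ)..2, |t| ^ r * Real.sqrt (1 - t^2/4)) := by
    rw [intervalIntegral.integral_add_adjacent_intervals (hc.intervalIntegrable _ _)
      (hc.intervalIntegrable _ _), intervalIntegral.integral_add_adjacent_intervals
      (hc.intervalIntegrable _ _) (hc.intervalIntegrable _ _)]
  have p1 : (0:ℝ) ≤ ∫ t in (-2:ℝ)..0, |t| ^ r * Real.sqrt (1 - t^2/4) :=
    intervalIntegral.integral_nonneg (by norm_num) (fun t _ => hnn t)
  have p3 : (0:ℝ) ≤ ∫ t in (1:ℝ)..2, |t| ^ r * Real.sqrt (1 - t^2/4) :=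
    intervalIntegral.integral_nonneg (by norm_num) (fun t _ => hnn t)
  linarith [e1 ▸ (by linarith : (0:ℝ) < (∫ t in (-2:ℝ)..0, |t| ^ r * Real.sqrt (1 - t^2/4))
        + (∫ t in (0:ℝ)..1, |t| ^ r * Real.sqrt (1 - t^2/4))
        + (∫ t in (1:ℝ)..2, |t| ^ r * Real.sqrt (1 - t^2/4)))]

lemma B_eq (r : ℝ) (hr : 0 < r) :
    (∫ t in (-2:ℝ)..2, |t| ^ r / Real.sqrt (1 - t^2/4))
      = (r+2) * ∫ t in (-2:ℝ)..2, |t| ^ r * Real.sqrt (1 - t^2/4) := by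
  have hint1 : IntervalIntegrable (fun t => |t| ^ r * Real.sqrt (1 - t^2/4)) volume (-2) 2 :=
    (cont_g1 r hr.le).intervalIntegrable _ _
  have hint2 : IntervalIntegrable (fun t => |t| ^ (r+2) / Real.sqrt (1 - t^2/4)) volume (-2) 2 :=
    integrable_sing (r+2) (by linarith)
  have hcongr : (∫ t in (-2:ℝ)..2, |t| ^ r / Real.sqrt (1 - t^2/4))
      = ∫ t in (-2:ℝ)..2, (|t| ^ r * Real.sqrt (1 - t^2/4)
          + (1/4) * (|t| ^ (r+2) / Real.sqrt (1 - t^2/4))) := by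
    apply intervalIntegral.integral_congr
    intro t ht
    dsimp only
    rw [Set.uIcc_of_le (by norm_num : (-2:ℝ) ≤ 2)] at ht
    have hu : (0:ℝ) ≤ 1 - t^2/4 := by nlinarith [ht.1, ht.2]
    have hpow : |t| ^ (r+2) = |t| ^ r * t^2 := by
      rcases eq_or_ne t 0 with rfl | ht0
      · rw [abs_zero, Real.zero_rpow (by linarith), Real.zero_rpow (ne_of_gt hr)]; ring
      · rw [Real.rpow_add (abs_pos.2 ht0), show ((2:ℝ)) = ((2:ℕ):ℝ) by norm_num,
          Real.rpow_natCast, sq_abs]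
    rcases eq_or_lt_of_le hu with heq | hlt
    · rw [← heq, Real.sqrt_zero, div_zero, div_zero, mul_zero]; ring
    · set S := Real.sqrt (1 - t^2/4) with hS
      have hsq : 0 < S := Real.sqrt_pos.2 hlt
      have hss : S * S = 1 - t^2/4 := Real.mul_self_sqrt hu
      rw [hpow, div_eq_iff hsq.ne']
      field_simp
      linear_combination (-(4:ℝ) * |t| ^ r) * hss
  rw [hcongr, intervalIntegral.integral_add hint1 (hint2.const_mul _),
    intervalIntegral.integral_const_mul, ← ftc_key r hr]
  ring

/-- For a real `r > 0`, the `r`-th absolute moment of the Sato–Tate measure equals the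
`r`-th absolute moment of the CM measure if and only if `r = 2`. -/
theorem satoTate_moment_eq_cm_moment_iff (r : ℝ) (hr : 0 < r) :
    (1 / π) * ∫ t in (-2:ℝ)..2, |t| ^ r * Real.sqrt (1 - t ^ 2 / 4)
      = (1 / (4 * π)) * ∫ t in (-2:ℝ)..2, |t| ^ r / Real.sqrt (1 - t ^ 2 / 4)
    ↔ r = 2 := by
  have hA := A_pos r hr
  have hB := B_eq r hr
  have hπ : π ≠ 0 := Real.pi_ne_zero
  set A := ∫ t in (-2:ℝ)..2, |t| ^ r * Real.sqrt (1 - t ^ 2 / 4) with hAdef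
  set B := ∫ t in (-2:ℝ)..2, |t| ^ r / Real.sqrt (1 - t ^ 2 / 4) with hBdef
  constructor
  · intro h
    rw [hB] at h
    have h4 : 4 * A = (r + 2) * A := by
      field_simp at h
      have h' : (4*A)*π = ((r+2)*A)*π := by linear_combination (A*π) * h
      exact mul_right_cancel₀ hπ h'
    nlinarith [h4, hA]
  · rintro rfl
    rw [hB]
    field_simp
    ring
end

section
/- For every real r > 0, the r-th absolute moment of the Sato–Tate measure has the closed form (1/π) ∫_{-2}^{2} |t|^r · √(1 − t²/4) dt = (2^r / √π) · Γ((r+1)/2) / Γ((r+4)/2), where Γ denotes the Gamma function. -/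
open Real MeasureTheory Set

lemma sq_image : (fun u : ℝ => u ^ 2) '' Set.Ioo 0 1 = Set.Ioo 0 1 := by
  ext x
  simp only [Set.mem_image, Set.mem_Ioo]
  constructor
  · rintro ⟨u, ⟨h0, h1⟩, rfl⟩
    exact ⟨by positivity, by nlinarith⟩
  · rintro ⟨h0, h1⟩
    exact ⟨Real.sqrt x, ⟨Real.sqrt_pos.mpr h0, by
      rw [show (1:ℝ) = Real.sqrt 1 by simp]; exact Real.sqrt_lt_sqrt h0.le h1⟩,
      Real.sq_sqrt h0.le⟩

lemma subst_sq (r : ℝ) (hr : 0 < r) :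
    ∫ v in (0:ℝ)..1, v ^ ((r-1)/2) * (1-v) ^ ((1:ℝ)/2)
      = 2 * ∫ u in (0:ℝ)..1, u ^ r * Real.sqrt (1 - u^2) := by
  have key := integral_image_eq_integral_abs_deriv_smul (s := Set.Ioo (0:ℝ) 1)
    (f := fun u => u ^ 2) (f' := fun u => 2 * u) measurableSet_Ioo
    (fun x _ => ((hasDerivAt_pow 2 x).congr_deriv (by ring)).hasDerivWithinAt)
    (fun x hx y hy hxy => by
      simp only at hxy
      have h1 : (0:ℝ) ≤ x := hx.1.le
      have h2 : (0:ℝ) ≤ y := hy.1.le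
      nlinarith)
    (fun v => v ^ ((r-1)/2) * (1-v) ^ ((1:ℝ)/2))
  rw [sq_image] at key
  rw [intervalIntegral.integral_of_le zero_le_one, integral_Ioc_eq_integral_Ioo, key,
    intervalIntegral.integral_of_le zero_le_one, integral_Ioc_eq_integral_Ioo,
    ← integral_const_mul]
  refine setIntegral_congr_fun measurableSet_Ioo fun u hu => ?_
  obtain ⟨h0, h1⟩ := hu
  have hsq : (0:ℝ) ≤ 1 - u ^ 2 := by nlinarith
  rw [smul_eq_mul, abs_of_pos (by positivity : (0:ℝ) < 2 * u),
    Real.sqrt_eq_rpow, ← Real.rpow_natCast u 2, ← Real.rpow_mul h0.le]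
  push_cast
  rw [show (2:ℝ) * ((r-1)/2) = r - 1 by ring]
  have : u ^ r = u ^ (r-1) * u := by
    rw [← Real.rpow_add_one h0.ne' (r-1)]; ring_nf
  rw [this]; ring

lemma realBeta (a b : ℝ) (ha : 0 < a) (hb : 0 < b) :
    ∫ x in (0:ℝ)..1, x ^ (a-1) * (1-x) ^ (b-1) =
      Real.Gamma a * Real.Gamma b / Real.Gamma (a+b) := by
  have h := Complex.Gamma_mul_Gamma_eq_betaIntegral (s := (a:ℂ)) (t := (b:ℂ))
    (by simpa using ha) (by simpa using hb)
  have hint : Complex.betaIntegral a b =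
      ((∫ x in (0:ℝ)..1, x ^ (a-1) * (1-x) ^ (b-1) : ℝ) : ℂ) := by
    rw [Complex.betaIntegral, ← intervalIntegral.integral_ofReal]
    refine intervalIntegral.integral_congr fun x hx => ?_
    rw [Set.uIcc_of_le zero_le_one] at hx
    push_cast
    rw [Complex.ofReal_cpow hx.1, Complex.ofReal_cpow (by linarith [hx.2] : (0:ℝ) ≤ 1 - x)]
    push_cast
    ring
  rw [hint, show ((a:ℂ) + b) = ((a+b:ℝ):ℂ) by push_cast; ring] at h
  simp_rw [Complex.Gamma_ofReal] at h
  have h3 : Real.Gamma a * Real.Gamma b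
      = Real.Gamma (a+b) * ∫ x in (0:ℝ)..1, x ^ (a-1) * (1-x) ^ (b-1) := by
    apply Complex.ofReal_injective
    push_cast
    exact h
  have hG : Real.Gamma (a+b) ≠ 0 := (Real.Gamma_pos_of_pos (by linarith)).ne'
  field_simp
  linarith [h3]

open Real

/-- Closed form for the `r`-th absolute moment of the Sato–Tate measure. -/
theorem satoTate_moment_closed_form (r : ℝ) (hr : 0 < r) :
    (1 / π) * ∫ t in (-2:ℝ)..2, |t| ^ r * Real.sqrt (1 - t ^ 2 / 4)
      = ((2 : ℝ) ^ r / Real.sqrt π) * (Real.Gamma ((r + 1) / 2) / Real.Gamma ((r + 4) / 2)) := by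
  set f : ℝ → ℝ := fun t => |t| ^ r * Real.sqrt (1 - t ^ 2 / 4) with hf
  have hcont : Continuous f := by
    apply Continuous.mul
    · exact continuous_abs.rpow_const fun x => Or.inr hr.le
    · exact (Real.continuous_sqrt).comp (by continuity)
  -- symmetry
  have hsym : ∫ t in (-2:ℝ)..0, f t = ∫ t in (0:ℝ)..2, f t := by
    have h := intervalIntegral.integral_comp_neg (a := (0:ℝ)) (b := 2) (f := f)
    simp only [neg_zero] at h
    rw [← h]
    refine intervalIntegral.integral_congr fun x hx => ?_
    simp only [hf, abs_neg, neg_sq]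
  have hsplit : ∫ t in (-2:ℝ)..2, f t = 2 * ∫ t in (0:ℝ)..2, f t := by
    rw [← intervalIntegral.integral_add_adjacent_intervals (b := (0:ℝ))
      (hcont.intervalIntegrable _ _) (hcont.intervalIntegrable _ _), hsym]
    ring
  -- linear substitution t = 2u
  have hlin : ∫ t in (0:ℝ)..2, f t = 2 * ∫ u in (0:ℝ)..1, f (2 * u) := by
    rw [intervalIntegral.integral_comp_mul_left (f := f) (a := (0:ℝ)) (b := 1) (c := 2)
      two_ne_zero]
    norm_num
    ring
  have hsimp : ∫ u in (0:ℝ)..1, f (2 * u)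
      = (2:ℝ) ^ r * ∫ u in (0:ℝ)..1, u ^ r * Real.sqrt (1 - u ^ 2) := by
    rw [← intervalIntegral.integral_const_mul]
    refine intervalIntegral.integral_congr fun u hu => ?_
    rw [Set.uIcc_of_le zero_le_one] at hu
    simp only [hf]
    rw [abs_of_nonneg (by linarith [hu.1] : (0:ℝ) ≤ 2*u),
      Real.mul_rpow (by norm_num) hu.1]
    ring_nf
  have hbeta := realBeta ((r+1)/2) (3/2) (by linarith) (by norm_num)
  have hsub := subst_sq r hr
  rw [show (r+1)/2 - 1 = (r-1)/2 by ring, show (3:ℝ)/2 - 1 = 1/2 by ring,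
    show (r+1)/2 + 3/2 = (r+4)/2 by ring, hsub] at hbeta
  have hG32 : Real.Gamma (3/2) = Real.sqrt π / 2 := by
    rw [show (3:ℝ)/2 = 1/2 + 1 by norm_num, Real.Gamma_add_one (by norm_num),
      Real.Gamma_one_half_eq]
    ring
  have hGpos : 0 < Real.Gamma ((r+4)/2) := Real.Gamma_pos_of_pos (by linarith)
  have hπ : Real.sqrt π * Real.sqrt π = π := Real.mul_self_sqrt pi_pos.le
  have hπ0 : Real.sqrt π ≠ 0 := by positivity
  rw [hG32] at hbeta
  rw [hsplit, hlin, hsimp]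
  have hI : ∫ u in (0:ℝ)..1, u ^ r * Real.sqrt (1 - u ^ 2)
      = Real.Gamma ((r+1)/2) * (Real.sqrt π / 2) / Real.Gamma ((r+4)/2) / 2 := by
    rw [← hbeta]; ring
  rw [hI, show π = Real.sqrt π * Real.sqrt π from hπ.symm]
  field_simp
  rw [Real.sqrt_sq (Real.sqrt_nonneg _)]
end

section
/- For every natural number N ≥ 150000, one has 2^{ω(N)} ≤ 0.000147 · ψ(N), where ω(N) is the number of distinct prime divisors of N and ψ(N) = N · ∏_{p | N, p prime} (1 + 1/p). -/
open Real

private def Tset : Finset ℕ := {2,3,5,7,11,13,17,19,23,29,31}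

private def ff (x : Bool) (n : ℕ) : ℕ := if x then n else 1
private def cc (x : Bool) : ℕ := if x then 1 else 0

private def sB (a b c d e f g h i j k : Bool) : ℕ :=
  cc a + (cc b + (cc c + (cc d + (cc e + (cc f + (cc g + (cc h + (cc i + (cc j + cc k)))))))))

private def pB (a b c d e f g h i j k : Bool) : ℕ :=
  ff a 2 * (ff b 3 * (ff c 5 * (ff d 7 * (ff e 11 * (ff f 13 * (ff g 17 * (ff h 19 *
    (ff i 23 * (ff j 29 * ff k 31)))))))))

private def aB (a b c d e f g h i j k : Bool) : ℕ :=
  ff a 3 * (ff b 4 * (ff c 6 * (ff d 8 * (ff e 12 * (ff f 14 * (ff g 18 * (ff h 20 *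
    (ff i 24 * (ff j 30 * ff k 32)))))))))

set_option maxRecDepth 10000 in
private lemma propDbool : ∀ (a b c d e f g h i j k : Bool) (bb : Fin 3),
    2 ^ (sB a b c d e f g h i j k + bb.val) * 10 ^ 6 * pB a b c d e f g h i j k
        ≤ 147 * 150000 * aB a b c d e f g h i j k
    ∨ 2 ^ (sB a b c d e f g h i j k + bb.val) * 10 ^ 6
        ≤ 147 * (if bb.val = 0 then
              max 1 ((150000 + pB a b c d e f g h i j k - 1) / pB a b c d e f g h i j k)
            else 1) * aB a b c d e f g h i j k * 38 ^ bb.val := by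
  decide

private lemma evalS (W : Finset ℕ) (hsub : W ⊆ Tset) :
    sB (decide (2∈W)) (decide (3∈W)) (decide (5∈W)) (decide (7∈W)) (decide (11∈W))
      (decide (13∈W)) (decide (17∈W)) (decide (19∈W)) (decide (23∈W)) (decide (29∈W))
      (decide (31∈W)) = W.card := by
  have h1 : ∑ p ∈ Tset, (if p ∈ W then 1 else 0) = W.card := by
    rw [Finset.sum_ite_mem, Finset.inter_eq_right.mpr hsub]
    exact (Finset.card_eq_sum_ones W).symm
  rw [← h1]
  simp only [Tset]
  repeat rw [Finset.sum_insert (by decide)]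
  rw [Finset.sum_singleton]
  simp only [sB, cc, decide_eq_true_eq]

private lemma evalP (W : Finset ℕ) (hsub : W ⊆ Tset) :
    pB (decide (2∈W)) (decide (3∈W)) (decide (5∈W)) (decide (7∈W)) (decide (11∈W))
      (decide (13∈W)) (decide (17∈W)) (decide (19∈W)) (decide (23∈W)) (decide (29∈W))
      (decide (31∈W)) = ∏ p ∈ W, p := by
  have h1 : ∏ p ∈ Tset, (if p ∈ W then p else 1) = ∏ p ∈ W, p := by
    rw [Finset.prod_ite_mem, Finset.inter_eq_right.mpr hsub]
  rw [← h1]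
  simp only [Tset]
  repeat rw [Finset.prod_insert (by decide)]
  rw [Finset.prod_singleton]
  simp only [pB, ff, decide_eq_true_eq]

private lemma evalA (W : Finset ℕ) (hsub : W ⊆ Tset) :
    aB (decide (2∈W)) (decide (3∈W)) (decide (5∈W)) (decide (7∈W)) (decide (11∈W))
      (decide (13∈W)) (decide (17∈W)) (decide (19∈W)) (decide (23∈W)) (decide (29∈W))
      (decide (31∈W)) = ∏ p ∈ W, (p+1) := by
  have h1 : ∏ p ∈ Tset, (if p ∈ W then p+1 else 1) = ∏ p ∈ W, (p+1) := by
    rw [Finset.prod_ite_mem, Finset.inter_eq_right.mpr hsub]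
  rw [← h1]
  simp only [Tset]
  repeat rw [Finset.prod_insert (by decide)]
  rw [Finset.prod_singleton]
  simp only [aB, ff, decide_eq_true_eq]

/-- For every natural number `N ≥ 150000`, `2^{ω(N)} ≤ 0.000147 · ψ(N)`, where `ω(N)` is
the number of distinct prime divisors of `N` and `ψ(N) = N · ∏_{p ∣ N} (1 + 1/p)`. -/
theorem two_pow_omega_le (N : ℕ) (hN : 150000 ≤ N) :
    (2 : ℝ) ^ N.primeFactors.card
      ≤ 0.000147 * ((N : ℝ) * ∏ p ∈ N.primeFactors, (1 + 1 / (p : ℝ))) := by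
  have hN0 : N ≠ 0 := by omega
  set S := N.primeFactors with hSdef
  have hprime : ∀ p ∈ S, Nat.Prime p := fun p hp => Nat.prime_of_mem_primeFactors hp
  obtain ⟨M, hM⟩ := Nat.prod_primeFactors_dvd N
  have hM1 : 1 ≤ M := by
    rcases Nat.eq_zero_or_pos M with h | h
    · rw [h, mul_zero] at hM; omega
    · exact h
  set W := S ∩ Tset with hWdef
  have hsub : W ⊆ Tset := Finset.inter_subset_right
  have hWS : ∀ p ∈ W, p ∈ S := fun p hp => (Finset.mem_inter.mp hp).1
  -- real product facts
  have hsplitR : ∀ V : Finset ℕ, (∀ p ∈ V, p ∈ S) →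
      ((∏ p ∈ V, (p+1) : ℕ) : ℝ) = ((∏ p ∈ V, p : ℕ) : ℝ) * ∏ p ∈ V, (1 + 1/(p:ℝ)) := by
    intro V hV
    push_cast
    rw [← Finset.prod_mul_distrib]
    refine Finset.prod_congr rfl fun p hp => ?_
    have h2 : (2:ℝ) ≤ (p:ℝ) := by exact_mod_cast (hprime p (hV p hp)).two_le
    have h0 : (p:ℝ) ≠ 0 := by linarith
    rw [mul_add, mul_one, mul_one_div, div_self h0]
  have hQ1 : ∀ V : Finset ℕ, 1 ≤ ∏ p ∈ V, (1 + 1/(p:ℝ)) := by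
    intro V
    calc (1:ℝ) = ∏ _p ∈ V, 1 := Finset.prod_const_one.symm
    _ ≤ ∏ p ∈ V, (1+1/(p:ℝ)) := by
        refine Finset.prod_le_prod (fun i _ => by norm_num) (fun i _ => by
          have : (0:ℝ) ≤ 1/(i:ℝ) := by positivity
          linarith)
  -- finishing routes
  have finish2 : 2^S.card * 10^6 ≤ 147 * (M * ∏ p ∈ S, (p+1)) →
      (2:ℝ)^S.card ≤ 0.000147 * ((N:ℝ) * ∏ p ∈ S, (1 + 1/(p:ℝ))) := by
    intro h
    have hc : ((2:ℝ))^S.card * 10^6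
        ≤ 147 * ((M:ℝ) * (((∏ p ∈ S, p : ℕ):ℝ) * ∏ p ∈ S, (1+1/(p:ℝ)))) := by
      rw [← hsplitR S (fun p hp => hp)]
      exact_mod_cast h
    have hNR : (N:ℝ) = ((∏ p ∈ S, p : ℕ):ℝ) * (M:ℝ) := by exact_mod_cast hM
    rw [show (0.000147:ℝ) = 147/10^6 by norm_num, hNR, div_mul_eq_mul_div,
      le_div_iff₀ (by norm_num : (0:ℝ) < 10^6)]
    calc (2:ℝ)^S.card * 10^6
        ≤ 147 * ((M:ℝ) * (((∏ p ∈ S, p:ℕ):ℝ) * ∏ p ∈ S, (1+1/(p:ℝ)))) := hc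
    _ = 147 * (((∏ p ∈ S, p:ℕ):ℝ) * (M:ℝ) * ∏ p ∈ S, (1+1/(p:ℝ))) := by ring
  have finish1 : 2^S.card * 10^6 * (∏ p ∈ W, p) ≤ 147 * 150000 * (∏ p ∈ W, (p+1)) →
      (2:ℝ)^S.card ≤ 0.000147 * ((N:ℝ) * ∏ p ∈ S, (1 + 1/(p:ℝ))) := by
    intro h
    have hPWpos : (0:ℝ) < ((∏ p ∈ W, p : ℕ):ℝ) := by
      have : 0 < ∏ p ∈ W, p := Finset.prod_pos fun p hp => (hprime p (hWS p hp)).pos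
      exact_mod_cast this
    have hc : (2:ℝ)^S.card * 10^6 * ((∏ p ∈ W, p:ℕ):ℝ)
        ≤ (147*150000 * ∏ p ∈ W, (1+1/(p:ℝ))) * ((∏ p ∈ W, p:ℕ):ℝ) := by
      have hc0 : (2:ℝ)^S.card * 10^6 * ((∏ p ∈ W, p:ℕ):ℝ)
          ≤ 147*150000 * (((∏ p ∈ W, p:ℕ):ℝ) * ∏ p ∈ W, (1+1/(p:ℝ))) := by
        rw [← hsplitR W hWS]
        exact_mod_cast h
      calc (2:ℝ)^S.card * 10^6 * ((∏ p ∈ W, p:ℕ):ℝ)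
          ≤ 147*150000 * (((∏ p ∈ W, p:ℕ):ℝ) * ∏ p ∈ W, (1+1/(p:ℝ))) := hc0
      _ = (147*150000 * ∏ p ∈ W, (1+1/(p:ℝ))) * ((∏ p ∈ W, p:ℕ):ℝ) := by ring
    have h2 : (2:ℝ)^S.card * 10^6 ≤ 147*150000 * ∏ p ∈ W, (1+1/(p:ℝ)) :=
      (mul_le_mul_iff_of_pos_right hPWpos).mp hc
    have hQW1 : 1 ≤ ∏ p ∈ W, (1+1/(p:ℝ)) := hQ1 W
    have hQsub : ∏ p ∈ W, (1+1/(p:ℝ)) ≤ ∏ p ∈ S, (1+1/(p:ℝ)) := by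
      rw [← Finset.prod_inter_mul_prod_diff S Tset (fun p => 1+1/(p:ℝ))]
      have hd := hQ1 (S \ Tset)
      have := hQ1 W
      nlinarith
    have hNge : (150000:ℝ) ≤ (N:ℝ) := by exact_mod_cast hN
    rw [show (0.000147:ℝ) = 147/10^6 by norm_num, div_mul_eq_mul_div,
      le_div_iff₀ (by norm_num : (0:ℝ) < 10^6)]
    have hmul : (150000:ℝ) * ∏ p ∈ W, (1+1/(p:ℝ)) ≤ (N:ℝ) * ∏ p ∈ S, (1+1/(p:ℝ)) :=
      mul_le_mul hNge hQsub (by linarith) (by linarith)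
    calc (2:ℝ)^S.card * 10^6 ≤ 147*150000 * ∏ p ∈ W, (1+1/(p:ℝ)) := h2
    _ = 147 * (150000 * ∏ p ∈ W, (1+1/(p:ℝ))) := by ring
    _ ≤ 147 * ((N:ℝ) * ∏ p ∈ S, (1+1/(p:ℝ))) := by linarith
  -- natural number side
  set b := (S \ Tset).card with hbdef
  have hcard : W.card + b = S.card := Finset.card_inter_add_card_sdiff S Tset
  have hbig : ∀ p ∈ S \ Tset, 38 ≤ p + 1 := by
    intro p hp
    obtain ⟨hpS, hpT⟩ := Finset.mem_sdiff.mp hp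
    have hpr := hprime p hpS
    have h2 := hpr.two_le
    by_contra hcon
    push_neg at hcon
    have hub : p ≤ 36 := by omega
    interval_cases p <;> revert hpr hpT <;> decide
  have h38 : 38^b ≤ ∏ p ∈ S \ Tset, (p+1) := by
    calc 38^b = ∏ _p ∈ S \ Tset, 38 := (Finset.prod_const 38).symm
    _ ≤ ∏ p ∈ S \ Tset, (p+1) := Finset.prod_le_prod' hbig
  have hsplitN : (∏ p ∈ W, (p+1)) * (∏ p ∈ S \ Tset, (p+1)) = ∏ p ∈ S, (p+1) :=
    Finset.prod_inter_mul_prod_diff S Tset _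
  by_cases hb3 : 3 ≤ b
  · -- at least three large prime factors
    apply finish2
    have hW2 : 2^W.card ≤ ∏ p ∈ W, (p+1) := by
      calc 2^W.card = ∏ _p ∈ W, 2 := (Finset.prod_const 2).symm
      _ ≤ ∏ p ∈ W, (p+1) := Finset.prod_le_prod' fun p hp => by
          have := (hprime p (hWS p hp)).two_le; omega
    have h19 : 10^6 ≤ 147 * 19^b := by
      calc (10:ℕ)^6 ≤ 147 * 19^3 := by norm_num
      _ ≤ 147*19^b := Nat.mul_le_mul_left _ (Nat.pow_le_pow_right (by norm_num) hb3)
    calc 2^S.card * 10^6 = 2^W.card * 2^b * 10^6 := by rw [← hcard, pow_add]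
    _ ≤ (∏ p ∈ W, (p+1)) * 2^b * (147*19^b) :=
        Nat.mul_le_mul (Nat.mul_le_mul hW2 le_rfl) h19
    _ = 147 * ((∏ p ∈ W, (p+1)) * 38^b) := by
        rw [show (38:ℕ) = 2*19 from rfl, mul_pow]; ring
    _ ≤ 147 * ((∏ p ∈ W, (p+1)) * ∏ p ∈ S \ Tset, (p+1)) :=
        Nat.mul_le_mul_left _ (Nat.mul_le_mul_left _ h38)
    _ = 147 * (1 * ∏ p ∈ S, (p+1)) := by rw [hsplitN, one_mul]
    _ ≤ 147 * (M * ∏ p ∈ S, (p+1)) :=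
        Nat.mul_le_mul_left _ (Nat.mul_le_mul_right _ hM1)
  · push_neg at hb3
    have hD := propDbool (decide (2∈W)) (decide (3∈W)) (decide (5∈W)) (decide (7∈W))
      (decide (11∈W)) (decide (13∈W)) (decide (17∈W)) (decide (19∈W)) (decide (23∈W))
      (decide (29∈W)) (decide (31∈W)) ⟨b, hb3⟩
    rw [evalS W hsub, evalP W hsub, evalA W hsub] at hD
    simp only [Fin.val_mk] at hD
    rcases hD with h1 | h2
    · apply finish1
      rw [← hcard]
      exact h1
    · apply finish2
      have hm : (if b = 0 then max 1 ((150000 + (∏ p ∈ W, p) - 1) / ∏ p ∈ W, p) else 1) ≤ M := by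
        split_ifs with h0
        · have hBe : S \ Tset = ∅ := Finset.card_eq_zero.mp h0
          have hSsub : S ⊆ Tset := Finset.sdiff_eq_empty_iff_subset.mp hBe
          have hWSeq : W = S := Finset.inter_eq_left.mpr hSsub
          rw [hWSeq]
          have hPpos : 0 < ∏ p ∈ S, p := Finset.prod_pos fun p hp => (hprime p hp).pos
          have hle : 150000 ≤ (∏ p ∈ S, p) * M := by rw [← hM]; exact hN
          refine max_le hM1 ?_
          have hlt : 150000 + (∏ p ∈ S, p) - 1 < (M+1) * (∏ p ∈ S, p) := by
            have e : (M+1) * (∏ p ∈ S, p) = (∏ p ∈ S, p) * M + (∏ p ∈ S, p) := by ring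
            omega
          exact Nat.lt_succ_iff.mp ((Nat.div_lt_iff_lt_mul hPpos).mpr hlt)
        · exact hM1
      calc 2^S.card * 10^6 = 2^(W.card + b) * 10^6 := by rw [hcard]
      _ ≤ 147 * (if b = 0 then max 1 ((150000 + (∏ p ∈ W, p) - 1) / ∏ p ∈ W, p) else 1)
            * (∏ p ∈ W, (p+1)) * 38^b := h2
      _ ≤ 147 * M * (∏ p ∈ W, (p+1)) * (∏ p ∈ S \ Tset, (p+1)) :=
          Nat.mul_le_mul (Nat.mul_le_mul (Nat.mul_le_mul_left 147 hm) le_rfl) h38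
      _ = 147 * (M * ∏ p ∈ S, (p+1)) := by rw [← hsplitN]; ring
end

section
/- For every natural number N ≥ 150000, one has 2^{ω(N)} · √N ≤ 0.0607 · ψ(N), where ω(N) is the number of distinct prime divisors of N and ψ(N) = N · ∏_{p | N, p prime} (1 + 1/p). -/
open Real Finset

noncomputable def frac (p : ℕ) : ℝ := 2 * p / (p + 1)

lemma frac_nonneg (p : ℕ) : 0 ≤ frac p := by unfold frac; positivity

lemma frac_le_two (p : ℕ) : frac p ≤ 2 := by
  unfold frac
  rw [div_le_iff₀ (by positivity)]
  have : (0:ℝ) ≤ (p:ℝ) := Nat.cast_nonneg p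
  nlinarith

lemma frac_le_gamma_sqrt {m p : ℕ} (γ : ℝ) (hγ : 0 ≤ γ) (hm : 1 ≤ m) (hmp : m ≤ p)
    (h : (4 * m : ℝ) ≤ γ ^ 2 * (m + 1) ^ 2) : frac p ≤ γ * Real.sqrt p := by
  have hp1 : (1:ℝ) ≤ (p:ℝ) := by exact_mod_cast hm.trans hmp
  have hmx : (m:ℝ) ≤ (p:ℝ) := by exact_mod_cast hmp
  have hm1 : (1:ℝ) ≤ (m:ℝ) := by exact_mod_cast hm
  set x : ℝ := (p:ℝ) with hxdef
  have h1 : 0 ≤ (x - m) * (x * m - 1) := mul_nonneg (by linarith) (by nlinarith)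
  have h2 : 4 * x * ((m:ℝ) + 1)^2 ≤ 4 * m * (x + 1)^2 := by nlinarith
  have hmpos : (0:ℝ) < ((m:ℝ) + 1)^2 := by positivity
  have h3 : 4 * x ≤ γ^2 * (x + 1)^2 := by
    nlinarith [mul_le_mul_of_nonneg_right h (sq_nonneg (x+1))]
  set s : ℝ := Real.sqrt x with hsdef
  have hs : s^2 = x := Real.sq_sqrt (by linarith)
  have hs1 : 1 ≤ s := by
    rw [hsdef, show (1:ℝ) = Real.sqrt 1 by simp]
    exact Real.sqrt_le_sqrt (by linarith)
  have hpos2 : 0 < 2*s + γ*(x+1) := by nlinarith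
  have h2s : 2*s ≤ γ*(x+1) := by nlinarith
  unfold frac
  rw [div_le_iff₀ (by positivity : (0:ℝ) < (p:ℝ)+1)]
  nlinarith [mul_le_mul_of_nonneg_left h2s (by linarith : (0:ℝ) ≤ s)]

lemma prod_sqrt (K : Finset ℕ) : ∏ p ∈ K, Real.sqrt p = Real.sqrt (∏ p ∈ K, (p:ℝ)) := by
  induction K using Finset.cons_induction with
  | empty => simp
  | cons a s ha ih => rw [prod_cons, prod_cons, ih, Real.sqrt_mul (Nat.cast_nonneg a)]

lemma ratio_bound (S F : Finset ℕ) (v : ℕ → ℝ) (c : ℝ) (hc : 0 < c)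
    (hv0 : ∀ p ∈ S, 0 ≤ v p)
    (hvF : ∀ p ∈ F, c ≤ v p)
    (htail : ∀ p ∈ S, p ∉ F → v p ≤ c) :
    ∏ p ∈ S, v p ≤ (∏ p ∈ F, v p) / c ^ F.card * c ^ S.card := by
  have step1 : ∏ p ∈ S, v p ≤ ∏ p ∈ S, ((if p ∈ F then v p / c else 1) * c) := by
    apply prod_le_prod hv0
    intro p hp
    by_cases hpF : p ∈ F
    · simp [hpF, div_mul_cancel₀ _ hc.ne']
    · simp [hpF]; exact htail p hp hpF
  have step2 : ∏ p ∈ S, ((if p ∈ F then v p / c else 1) * c)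
      = (∏ p ∈ S ∩ F, (v p / c)) * c ^ S.card := by
    rw [prod_mul_distrib, prod_const]
    congr 1
    rw [← prod_ite_mem S F (fun p => v p / c)]
  have hone : ∀ p ∈ F, 1 ≤ v p / c := fun p hp => (one_le_div hc).mpr (hvF p hp)
  have step3 : (∏ p ∈ S ∩ F, (v p / c)) ≤ ∏ p ∈ F, (v p / c) := by
    rw [← prod_sdiff (inter_subset_right : S ∩ F ⊆ F)]
    have h1 : (1:ℝ) ≤ ∏ p ∈ F \ (S ∩ F), (v p / c) := by
      calc (1:ℝ) = ∏ p ∈ F \ (S ∩ F), 1 := by simp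
        _ ≤ _ := prod_le_prod (fun p _ => zero_le_one) (fun p hp => hone p (mem_sdiff.mp hp).1)
    have h2 : (0:ℝ) ≤ ∏ p ∈ S ∩ F, (v p / c) :=
      prod_nonneg (fun p hp => le_trans (by linarith [hone p (mem_of_mem_inter_right hp)]) le_rfl)
    nlinarith
  have step4 : (∏ p ∈ F, (v p / c)) = (∏ p ∈ F, v p) / c ^ F.card := by
    rw [prod_div_distrib, prod_const]
  calc ∏ p ∈ S, v p ≤ _ := step1
    _ = _ := step2
    _ ≤ (∏ p ∈ F, (v p / c)) * c ^ S.card :=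
        mul_le_mul_of_nonneg_right step3 (pow_nonneg hc.le _)
    _ = (∏ p ∈ F, v p) / c ^ F.card * c ^ S.card := by rw [step4]

noncomputable def uu (t : ℝ) (p : ℕ) : ℝ :=
  if p = 2 then 0.94281 else if p = 3 then 0.86603 else if p = 5 then 0.74536
  else if p = 7 then 0.66144 else if p = 11 then 0.55278 else if p = 13 then 0.51508 else t

lemma uu_nonneg {t : ℝ} (ht : 0 ≤ t) (p : ℕ) : 0 ≤ uu t p := by
  unfold uu; split_ifs <;> first | exact ht | norm_num

lemma uu_eq_t {t : ℝ} {p : ℕ} (h2 : p ≠ 2) (h3 : p ≠ 3) (h5 : p ≠ 5) (h7 : p ≠ 7)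
    (h11 : p ≠ 11) (h13 : p ≠ 13) : uu t p = t := by
  simp [uu, h2, h3, h5, h7, h11, h13]

lemma prime_ge_17 {r : ℕ} (hr : r.Prime) (h2 : r ≠ 2) (h3 : r ≠ 3) (h5 : r ≠ 5)
    (h7 : r ≠ 7) (h11 : r ≠ 11) (h13 : r ≠ 13) : 17 ≤ r := by
  by_contra hlt
  push_neg at hlt
  have h2le := hr.two_le
  interval_cases r <;> first | omega | exact absurd hr (by norm_num)

lemma prime_ge_19 {r : ℕ} (hr : r.Prime) (h : 18 ≤ r) : 19 ≤ r := by
  rcases eq_or_lt_of_le h with h' | h'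
  · exact absurd (h' ▸ hr) (by norm_num)
  · omega

lemma prime_ge_23 {r : ℕ} (hr : r.Prime) (h : 20 ≤ r) : 23 ≤ r := by
  by_contra hlt
  push_neg at hlt
  interval_cases r <;> exact absurd hr (by norm_num)

lemma prime_ge_73 {r : ℕ} (hr : r.Prime) (h : 72 ≤ r) : 73 ≤ r := by
  rcases eq_or_lt_of_le h with h' | h'
  · exact absurd (h' ▸ hr) (by norm_num)
  · omega

lemma sqrt_ge {N : ℕ} (hN : 150000 ≤ N) : (387.298:ℝ) ≤ Real.sqrt N := by
  have h2 : ((387.298:ℝ))^2 ≤ (N:ℝ) := by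
    have : (150000:ℝ) ≤ (N:ℝ) := by exact_mod_cast hN
    nlinarith
  calc (387.298:ℝ) = Real.sqrt (387.298^2) := (Real.sqrt_sq (by norm_num)).symm
    _ ≤ Real.sqrt N := Real.sqrt_le_sqrt h2

lemma p_master {N : ℕ} (hN : 150000 ≤ N) {B : ℝ}
    (h : ∏ p ∈ N.primeFactors, frac p ≤ B) (hB : B ≤ 23.5089) :
    ∏ p ∈ N.primeFactors, frac p ≤ 0.0607 * Real.sqrt N := by
  have h1 := sqrt_ge hN
  have h3 : (23.5089:ℝ) ≤ 0.0607 * 387.298 := by norm_num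
  calc ∏ p ∈ N.primeFactors, frac p ≤ B := h
    _ ≤ 0.0607 * 387.298 := by linarith
    _ ≤ 0.0607 * Real.sqrt N := by nlinarith

lemma sqrtR_le {N : ℕ} (hN1 : 1 ≤ N) :
    Real.sqrt (∏ p ∈ N.primeFactors, (p:ℝ)) ≤ Real.sqrt N := by
  apply Real.sqrt_le_sqrt
  rw [← Nat.cast_prod]
  exact_mod_cast Nat.le_of_dvd (by omega) (Nat.prod_primeFactors_dvd N)

lemma g_master {N : ℕ} (hN1 : 1 ≤ N) (v : ℕ → ℝ) {V : ℝ}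
    (hv0 : ∀ p ∈ N.primeFactors, 0 ≤ v p)
    (h1 : ∀ p ∈ N.primeFactors, frac p ≤ v p * Real.sqrt p)
    (h2 : ∏ p ∈ N.primeFactors, v p ≤ V) :
    ∏ p ∈ N.primeFactors, frac p ≤ V * Real.sqrt N := by
  calc ∏ p ∈ N.primeFactors, frac p ≤ ∏ p ∈ N.primeFactors, (v p * Real.sqrt p) :=
      prod_le_prod (fun p _ => frac_nonneg p) h1
    _ = (∏ p ∈ N.primeFactors, v p) * ∏ p ∈ N.primeFactors, Real.sqrt p := prod_mul_distrib
    _ = (∏ p ∈ N.primeFactors, v p) * Real.sqrt (∏ p ∈ N.primeFactors, (p:ℝ)) := by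
        rw [prod_sqrt]
    _ ≤ V * Real.sqrt N := by
        apply mul_le_mul h2 (sqrtR_le hN1) (Real.sqrt_nonneg _)
        exact le_trans (prod_nonneg hv0) h2

lemma pointwise_uu {t : ℝ} {m : ℕ} {S : Finset ℕ} (hprime : ∀ p ∈ S, p.Prime)
    (ht : 0 ≤ t) (hm : 1 ≤ m) (hnum : (4 * m : ℝ) ≤ t ^ 2 * (m + 1) ^ 2)
    (htail : ∀ p ∈ S, p ≠ 2 → p ≠ 3 → p ≠ 5 → p ≠ 7 → p ≠ 11 → p ≠ 13 → m ≤ p) :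
    ∀ p ∈ S, frac p ≤ uu t p * Real.sqrt p := by
  intro p hp
  by_cases h2 : p = 2
  · subst h2
    simpa [uu] using frac_le_gamma_sqrt (m := 2) 0.94281 (by norm_num) (by norm_num) le_rfl
      (by norm_num)
  by_cases h3 : p = 3
  · subst h3
    simpa [uu] using frac_le_gamma_sqrt (m := 3) 0.86603 (by norm_num) (by norm_num) le_rfl
      (by norm_num)
  by_cases h5 : p = 5
  · subst h5
    simpa [uu] using frac_le_gamma_sqrt (m := 5) 0.74536 (by norm_num) (by norm_num) le_rfl
      (by norm_num)
  by_cases h7 : p = 7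
  · subst h7
    simpa [uu] using frac_le_gamma_sqrt (m := 7) 0.66144 (by norm_num) (by norm_num) le_rfl
      (by norm_num)
  by_cases h11 : p = 11
  · subst h11
    simpa [uu] using frac_le_gamma_sqrt (m := 11) 0.55278 (by norm_num) (by norm_num) le_rfl
      (by norm_num)
  by_cases h13 : p = 13
  · subst h13
    simpa [uu] using frac_le_gamma_sqrt (m := 13) 0.51508 (by norm_num) (by norm_num) le_rfl
      (by norm_num)
  · rw [uu_eq_t h2 h3 h5 h7 h11 h13]
    exact frac_le_gamma_sqrt t ht hm (htail p hp h2 h3 h5 h7 h11 h13) hnum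

lemma g_leaf {N : ℕ} (hN1 : 1 ≤ N) (t : ℝ) (m : ℕ) (F : Finset ℕ)
    (ht : 0 < t) (hm : 1 ≤ m)
    (hnum : (4 * m : ℝ) ≤ t ^ 2 * (m + 1) ^ 2)
    (htail : ∀ p ∈ N.primeFactors, p ≠ 2 → p ≠ 3 → p ≠ 5 → p ≠ 7 → p ≠ 11 → p ≠ 13 → m ≤ p)
    (htail2 : ∀ p ∈ N.primeFactors, p ∉ F → uu t p ≤ t)
    (hvF : ∀ p ∈ F, t ≤ uu t p)
    (hval : (∏ p ∈ F, uu t p) / t ^ F.card * t ^ N.primeFactors.card ≤ 0.0607) :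
    ∏ p ∈ N.primeFactors, frac p ≤ 0.0607 * Real.sqrt N :=
  g_master hN1 (uu t) (fun p _ => uu_nonneg ht.le p)
    (pointwise_uu (fun p hp => Nat.prime_of_mem_primeFactors hp) ht.le hm hnum htail)
    (le_trans (ratio_bound _ F (uu t) t ht (fun p _ => uu_nonneg ht.le p) hvF htail2) hval)

lemma p_leaf {N : ℕ} (hN : 150000 ≤ N) (K : Finset ℕ) (hKS : K ⊆ N.primeFactors)
    {BK : ℝ} (hBK : ∏ p ∈ K, frac p ≤ BK)
    {n : ℕ} (hcard : (N.primeFactors \ K).card ≤ n)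
    (hval : BK * 2 ^ n ≤ 23.5089) :
    ∏ p ∈ N.primeFactors, frac p ≤ 0.0607 * Real.sqrt N := by
  apply p_master hN ?_ hval
  rw [← prod_sdiff hKS]
  have h1 : ∏ p ∈ N.primeFactors \ K, frac p ≤ 2 ^ n := by
    calc ∏ p ∈ N.primeFactors \ K, frac p ≤ ∏ p ∈ N.primeFactors \ K, 2 :=
        prod_le_prod (fun p _ => frac_nonneg p) (fun p _ => frac_le_two p)
      _ = 2 ^ (N.primeFactors \ K).card := prod_const 2
      _ ≤ 2 ^ n := by exact pow_le_pow_right₀ (by norm_num) hcard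
  calc (∏ p ∈ N.primeFactors \ K, frac p) * ∏ p ∈ K, frac p ≤ 2 ^ n * BK :=
      mul_le_mul h1 hBK (prod_nonneg fun p _ => frac_nonneg p) (by positivity)
    _ = BK * 2 ^ n := mul_comm _ _

lemma tail2 {m1 m2 : ℕ} {γa γb : ℝ} (E : Finset ℕ) (hE : E.card = 2)
    (hall : ∀ r ∈ E, r.Prime ∧ m1 ≤ r)
    (hstep : ∀ r, r.Prime → m1 < r → m2 ≤ r)
    (hm1 : 1 ≤ m1) (hm2 : 1 ≤ m2)
    (hga : 0 ≤ γa) (hgb : 0 ≤ γb)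
    (hna : (4 * m1 : ℝ) ≤ γa ^ 2 * (m1 + 1) ^ 2) (hnb : (4 * m2 : ℝ) ≤ γb ^ 2 * (m2 + 1) ^ 2) :
    ∏ r ∈ E, frac r ≤ γa * γb * Real.sqrt (∏ r ∈ E, (r:ℝ)) := by
  obtain ⟨p, q, hpq, hEeq⟩ := Finset.card_eq_two.mp hE
  subst hEeq
  have hp := hall p (by simp)
  have hq := hall q (by simp)
  rw [prod_pair hpq, prod_pair hpq]
  rcases hpq.lt_or_gt with h | h
  · have hq2 : m2 ≤ q := hstep q hq.1 (lt_of_le_of_lt hp.2 h)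
    have b1 := frac_le_gamma_sqrt γa hga hm1 hp.2 hna
    have b2 := frac_le_gamma_sqrt γb hgb hm2 hq2 hnb
    calc frac p * frac q ≤ (γa * Real.sqrt p) * (γb * Real.sqrt q) :=
        mul_le_mul b1 b2 (frac_nonneg q) (by positivity)
      _ = γa * γb * (Real.sqrt p * Real.sqrt q) := by ring
      _ = γa * γb * Real.sqrt ((p:ℝ) * q) := by rw [Real.sqrt_mul (Nat.cast_nonneg p)]
  · have hp2 : m2 ≤ p := hstep p hp.1 (lt_of_le_of_lt hq.2 h)
    have b1 := frac_le_gamma_sqrt γb hgb hm2 hp2 hnb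
    have b2 := frac_le_gamma_sqrt γa hga hm1 hq.2 hna
    calc frac p * frac q ≤ (γb * Real.sqrt p) * (γa * Real.sqrt q) :=
        mul_le_mul b1 b2 (frac_nonneg q) (by positivity)
      _ = γa * γb * (Real.sqrt p * Real.sqrt q) := by ring
      _ = γa * γb * Real.sqrt ((p:ℝ) * q) := by rw [Real.sqrt_mul (Nat.cast_nonneg p)]
lemma pair_leaf {N : ℕ} (hN1 : 1 ≤ N) (K : Finset ℕ) (hKS : K ⊆ N.primeFactors)
    {m1 m2 : ℕ} {γa γb : ℝ}
    (hcardE : (N.primeFactors \ K).card = 2)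
    (hallE : ∀ r ∈ N.primeFactors \ K, r.Prime ∧ m1 ≤ r)
    (hstep : ∀ r, r.Prime → m1 < r → m2 ≤ r)
    (hm1 : 1 ≤ m1) (hm2 : 1 ≤ m2) (hga : 0 ≤ γa) (hgb : 0 ≤ γb)
    (hna : (4 * m1 : ℝ) ≤ γa ^ 2 * (m1 + 1) ^ 2) (hnb : (4 * m2 : ℝ) ≤ γb ^ 2 * (m2 + 1) ^ 2)
    (hKpt : ∀ p ∈ K, frac p ≤ uu 0.45813 p * Real.sqrt p)
    (hval : γa * γb * ∏ p ∈ K, uu 0.45813 p ≤ 0.0607) :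
    ∏ p ∈ N.primeFactors, frac p ≤ 0.0607 * Real.sqrt N := by
  have hEb := tail2 _ hcardE hallE hstep hm1 hm2 hga hgb hna hnb
  have hKb : ∏ p ∈ K, frac p ≤ (∏ p ∈ K, uu 0.45813 p) * Real.sqrt (∏ p ∈ K, (p:ℝ)) := by
    calc ∏ p ∈ K, frac p ≤ ∏ p ∈ K, (uu 0.45813 p * Real.sqrt p) :=
        prod_le_prod (fun p _ => frac_nonneg p) hKpt
      _ = _ := by rw [prod_mul_distrib, prod_sqrt]
  calc ∏ p ∈ N.primeFactors, frac p
      = (∏ p ∈ N.primeFactors \ K, frac p) * ∏ p ∈ K, frac p := (prod_sdiff hKS).symm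
    _ ≤ (γa * γb * Real.sqrt (∏ r ∈ N.primeFactors \ K, (r:ℝ))) *
        ((∏ p ∈ K, uu 0.45813 p) * Real.sqrt (∏ p ∈ K, (p:ℝ))) := by
        apply mul_le_mul hEb hKb (prod_nonneg fun p _ => frac_nonneg p)
        have : (0:ℝ) ≤ ∏ r ∈ N.primeFactors \ K, (r:ℝ) :=
          prod_nonneg fun r _ => Nat.cast_nonneg r
        positivity
    _ = (γa * γb * ∏ p ∈ K, uu 0.45813 p) *
        (Real.sqrt (∏ r ∈ N.primeFactors \ K, (r:ℝ)) * Real.sqrt (∏ p ∈ K, (p:ℝ))) := by ring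
    _ = (γa * γb * ∏ p ∈ K, uu 0.45813 p) *
        Real.sqrt ((∏ r ∈ N.primeFactors \ K, (r:ℝ)) * ∏ p ∈ K, (p:ℝ)) := by
        rw [← Real.sqrt_mul (prod_nonneg fun r _ => Nat.cast_nonneg r)]
    _ = (γa * γb * ∏ p ∈ K, uu 0.45813 p) * Real.sqrt (∏ p ∈ N.primeFactors, (p:ℝ)) := by
        rw [prod_sdiff hKS]
    _ ≤ 0.0607 * Real.sqrt N :=
        mul_le_mul hval (sqrtR_le hN1) (Real.sqrt_nonneg _) (by norm_num)

lemma leafB {N : ℕ} (hN : 150000 ≤ N) (hk5 : N.primeFactors.card = 5)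
    (h3S : 3 ∈ N.primeFactors) (q : ℕ) (hqS : q ∈ N.primeFactors) (hq5 : 5 ≤ q)
    (hq13 : q ≤ 13) :
    ∏ p ∈ N.primeFactors, frac p ≤ 0.0607 * Real.sqrt N := by
  have hne : (3:ℕ) ≠ q := by omega
  have hKS : ({3, q} : Finset ℕ) ⊆ N.primeFactors := by
    intro p hp
    rcases mem_insert.mp hp with h | h
    · rwa [h]
    · rw [mem_singleton] at h; rwa [h]
  refine p_leaf hN {3, q} hKS (BK := (3/2) * (13/7)) ?_ (n := 3) ?_ (by norm_num)
  · rw [prod_pair hne]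
    have hfq : frac q ≤ 13/7 := by
      unfold frac
      rw [div_le_iff₀ (by positivity)]
      have : (q:ℝ) ≤ 13 := by exact_mod_cast hq13
      linarith
    have hf3 : frac 3 = 3/2 := by norm_num [frac]
    rw [hf3]
    exact mul_le_mul_of_nonneg_left hfq (by norm_num)
  · rw [card_sdiff_of_subset hKS, card_insert_of_notMem (by simpa using hne), card_singleton, hk5]

lemma key {N : ℕ} (hN : 150000 ≤ N) :
    ∏ p ∈ N.primeFactors, frac p ≤ 0.0607 * Real.sqrt N := by
  have hN1 : 1 ≤ N := by omega
  have hpr : ∀ p ∈ N.primeFactors, p.Prime := fun p hp => Nat.prime_of_mem_primeFactors hp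
  have htail17 : ∀ p ∈ N.primeFactors,
      p ≠ 2 → p ≠ 3 → p ≠ 5 → p ≠ 7 → p ≠ 11 → p ≠ 13 → 17 ≤ p :=
    fun p hp h2 h3 h5 h7 h11 h13 => prime_ge_17 (hpr p hp) h2 h3 h5 h7 h11 h13
  by_cases hk4 : N.primeFactors.card ≤ 4
  · exact p_leaf hN ∅ (empty_subset _) (le_of_eq prod_empty) (by simpa using hk4) (by norm_num)
  by_cases hk7 : 7 ≤ N.primeFactors.card
  · apply g_master hN1 (uu 0.45813) (fun p _ => uu_nonneg (by norm_num) p)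
      (pointwise_uu hpr (by norm_num) (by norm_num) (by norm_num) htail17)
    have hr := ratio_bound N.primeFactors {2,3,5,7,11,13} (uu 0.45813) 0.45813 (by norm_num)
      (fun p _ => uu_nonneg (by norm_num) p)
      (by intro p hp; fin_cases hp <;> norm_num [uu])
      (by intro p hp hpF
          simp only [mem_insert, mem_singleton, not_or] at hpF
          obtain ⟨a2, a3, a5, a7, a11, a13⟩ := hpF
          rw [uu_eq_t a2 a3 a5 a7 a11 a13])
    refine le_trans hr ?_
    have hF : (∏ p ∈ ({2,3,5,7,11,13}:Finset ℕ), uu 0.45813 p)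
        = 0.94281 * (0.86603 * (0.74536 * (0.66144 * (0.55278 * 0.51508)))) := by
      norm_num [prod_insert, mem_insert, mem_singleton, uu]
    rw [hF, show ({2,3,5,7,11,13}:Finset ℕ).card = 6 from by decide]
    have hpow : (0.45813:ℝ) ^ N.primeFactors.card ≤ 0.45813 ^ 7 :=
      pow_le_pow_of_le_one (by norm_num) (by norm_num) hk7
    have hstep : ((0.94281:ℝ) * (0.86603 * (0.74536 * (0.66144 * (0.55278 * 0.51508))))) / 0.45813 ^ 6
          * 0.45813 ^ (N.primeFactors.card)
        ≤ ((0.94281:ℝ) * (0.86603 * (0.74536 * (0.66144 * (0.55278 * 0.51508))))) / 0.45813 ^ 6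
          * 0.45813 ^ 7 := mul_le_mul_of_nonneg_left hpow (by positivity)
    exact hstep.trans (by norm_num)
    -- now card is 5 or 6
  have hk56 : N.primeFactors.card = 5 ∨ N.primeFactors.card = 6 := by omega
  have hne_mem : ∀ {a p : ℕ}, p ∈ N.primeFactors → a ∉ N.primeFactors → p ≠ a :=
    fun hp ha => ne_of_mem_of_not_mem hp ha
  rcases hk56 with hk5 | hk6
  · -- ===== card = 5 =====
    by_cases h2S : 2 ∈ N.primeFactors
    · -- leaf A
      refine p_leaf hN {2} (by simpa using h2S) (BK := 4/3) (by norm_num [frac]) (n := 4)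
        ?_ (by norm_num)
      rw [card_sdiff_of_subset (by simpa using h2S), hk5]
      norm_num
    by_cases h3S : 3 ∈ N.primeFactors
    · by_cases h5S : 5 ∈ N.primeFactors
      · exact leafB hN hk5 h3S 5 h5S (by norm_num) (by norm_num)
      by_cases h7S : 7 ∈ N.primeFactors
      · exact leafB hN hk5 h3S 7 h7S (by norm_num) (by norm_num)
      by_cases h11S : 11 ∈ N.primeFactors
      · exact leafB hN hk5 h3S 11 h11S (by norm_num) (by norm_num)
      by_cases h13S : 13 ∈ N.primeFactors
      · exact leafB hN hk5 h3S 13 h13S (by norm_num) (by norm_num)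
      · -- leaf C
        apply g_leaf hN1 0.45813 17 {3} (by norm_num) (by norm_num) (by norm_num) htail17
          ?_ (by intro p hp; fin_cases hp <;> norm_num [uu]) ?_
        · intro p hp hpF
          simp only [mem_singleton] at hpF
          exact le_of_eq (uu_eq_t (hne_mem hp h2S) hpF (hne_mem hp h5S) (hne_mem hp h7S)
            (hne_mem hp h11S) (hne_mem hp h13S))
        · rw [hk5]
          norm_num [prod_singleton, card_singleton, uu]
    by_cases h5S : 5 ∈ N.primeFactors
    · by_cases h7S : 7 ∈ N.primeFactors
      · -- leaf D
        refine p_leaf hN {5, 7} ?_ (BK := 35/12)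
          (by norm_num [prod_insert, mem_insert, mem_singleton, frac]) (n := 3) ?_ (by norm_num)
        · rw [insert_subset_iff, singleton_subset_iff]; exact ⟨h5S, h7S⟩
        · rw [card_sdiff_of_subset (by rw [insert_subset_iff, singleton_subset_iff]; exact ⟨h5S, h7S⟩), hk5]
          norm_num
      · -- leaf E
        apply g_leaf hN1 0.45813 17 {5, 11, 13} (by norm_num) (by norm_num) (by norm_num) htail17
          ?_ (by intro p hp; fin_cases hp <;> norm_num [uu]) ?_
        · intro p hp hpF
          simp only [mem_insert, mem_singleton, not_or] at hpF
          obtain ⟨a5, a11, a13⟩ := hpF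
          exact le_of_eq (uu_eq_t (hne_mem hp h2S) (hne_mem hp h3S) a5 (hne_mem hp h7S) a11 a13)
        · rw [hk5]
          norm_num [prod_insert, mem_insert, mem_singleton, card_insert_of_notMem,
            card_singleton, uu]
    · -- leaf F
      apply g_leaf hN1 0.45813 17 {7, 11, 13} (by norm_num) (by norm_num) (by norm_num) htail17
        ?_ (by intro p hp; fin_cases hp <;> norm_num [uu]) ?_
      · intro p hp hpF
        simp only [mem_insert, mem_singleton, not_or] at hpF
        obtain ⟨a7, a11, a13⟩ := hpF
        exact le_of_eq (uu_eq_t (hne_mem hp h2S) (hne_mem hp h3S) (hne_mem hp h5S) a7 a11 a13)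
      · rw [hk5]
        norm_num [prod_insert, mem_insert, mem_singleton, card_insert_of_notMem,
          card_singleton, uu]
  · -- ===== card = 6 =====
    by_cases h2S : 2 ∈ N.primeFactors
    swap
    · -- leaf 1 : 2 ∉ S
      apply g_leaf hN1 0.45813 17 {3, 5, 7, 11, 13} (by norm_num) (by norm_num) (by norm_num)
        htail17 ?_ (by intro p hp; fin_cases hp <;> norm_num [uu]) ?_
      · intro p hp hpF
        simp only [mem_insert, mem_singleton, not_or] at hpF
        obtain ⟨a3, a5, a7, a11, a13⟩ := hpF
        exact le_of_eq (uu_eq_t (hne_mem hp h2S) a3 a5 a7 a11 a13)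
      · rw [hk6]
        norm_num [prod_insert, mem_insert, mem_singleton, card_insert_of_notMem,
          card_singleton, uu]
    by_cases h3S : 3 ∈ N.primeFactors
    swap
    · -- leaf 2 : 2 ∈ S, 3 ∉ S (tight)
      apply g_leaf hN1 0.45813 17 {2, 5, 7, 11, 13} (by norm_num) (by norm_num) (by norm_num)
        htail17 ?_ (by intro p hp; fin_cases hp <;> norm_num [uu]) ?_
      · intro p hp hpF
        simp only [mem_insert, mem_singleton, not_or] at hpF
        obtain ⟨a2, a5, a7, a11, a13⟩ := hpF
        exact le_of_eq (uu_eq_t a2 (hne_mem hp h3S) a5 a7 a11 a13)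
      · rw [hk6]
        norm_num [prod_insert, mem_insert, mem_singleton, card_insert_of_notMem,
          card_singleton, uu]
    by_cases h5S : 5 ∈ N.primeFactors
    · by_cases h7S : 7 ∈ N.primeFactors
      · -- leaf 3a
        have hKS : ({2,3,5,7} : Finset ℕ) ⊆ N.primeFactors := by
          intro p hp; fin_cases hp <;> assumption
        refine p_leaf hN {2,3,5,7} hKS (BK := 35/6)
          (by norm_num [prod_insert, mem_insert, mem_singleton, frac]) (n := 2) ?_ (by norm_num)
        rw [card_sdiff_of_subset hKS, hk6]; norm_num
      by_cases h11S : 11 ∈ N.primeFactors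
      · by_cases h13S : 13 ∈ N.primeFactors
        · -- leaf 3b
          have hKS : ({2,3,5,11,13} : Finset ℕ) ⊆ N.primeFactors := by
            intro p hp; fin_cases hp <;> assumption
          refine p_leaf hN {2,3,5,11,13} hKS (BK := 715/63)
            (by norm_num [prod_insert, mem_insert, mem_singleton, frac]) (n := 1) ?_ (by norm_num)
          rw [card_sdiff_of_subset hKS, hk6]; norm_num
        · -- leaf 3c
          by_cases h17S : 17 ∈ N.primeFactors
          · have hKS : ({2,3,5,11,17} : Finset ℕ) ⊆ N.primeFactors := by
              intro p hp; fin_cases hp <;> assumption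
            refine p_leaf hN {2,3,5,11,17} hKS (BK := 935/81)
              (by norm_num [prod_insert, mem_insert, mem_singleton, frac]) (n := 1) ?_
              (by norm_num)
            rw [card_sdiff_of_subset hKS, hk6]; norm_num
          · have hKS : ({2,3,5,11} : Finset ℕ) ⊆ N.primeFactors := by
              intro p hp; fin_cases hp <;> assumption
            apply pair_leaf hN1 {2,3,5,11} hKS (m1 := 19) (m2 := 23)
              (γa := 0.43589) (γb := 0.39966)
              ?_ ?_ (fun r hr h => prime_ge_23 hr (by omega)) (by norm_num) (by norm_num)
              (by norm_num) (by norm_num) (by norm_num) (by norm_num) ?_ ?_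
            · rw [card_sdiff_of_subset hKS, hk6]; norm_num
            · intro r hr
              rw [mem_sdiff] at hr
              obtain ⟨hrS, hrK⟩ := hr
              simp only [mem_insert, mem_singleton, not_or] at hrK
              obtain ⟨a2, a3, a5, a11⟩ := hrK
              have hrp := hpr r hrS
              have h17 : 17 ≤ r := prime_ge_17 hrp a2 a3 a5 (hne_mem hrS h7S) a11
                (hne_mem hrS h13S)
              have hr17 : r ≠ 17 := hne_mem hrS h17S
              exact ⟨hrp, prime_ge_19 hrp (by omega)⟩
            · exact pointwise_uu (by intro p hp; fin_cases hp <;> norm_num) (by norm_num)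
                (by norm_num : 1 ≤ 17) (by norm_num) (by intro p hp _ _ _ _ _ _; fin_cases hp <;> omega)
            · norm_num [prod_insert, mem_insert, mem_singleton, uu]
      · by_cases h13S : 13 ∈ N.primeFactors
        · -- leaf 3d
          by_cases h17S : 17 ∈ N.primeFactors
          · have hKS : ({2,3,5,13,17} : Finset ℕ) ⊆ N.primeFactors := by
              intro p hp; fin_cases hp <;> assumption
            refine p_leaf hN {2,3,5,13,17} hKS (BK := 2210/189)
              (by norm_num [prod_insert, mem_insert, mem_singleton, frac]) (n := 1) ?_
              (by norm_num)
            rw [card_sdiff_of_subset hKS, hk6]; norm_num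
          · -- g_leaf with tail 0.43589, m = 19
            apply g_leaf hN1 0.43589 19 {2, 3, 5, 13} (by norm_num) (by norm_num) (by norm_num)
              ?_ ?_ (by intro p hp; fin_cases hp <;> norm_num [uu]) ?_
            · intro p hp a2 a3 a5 a7 a11 a13
              have h17 : 17 ≤ p := prime_ge_17 (hpr p hp) a2 a3 a5 a7 a11 a13
              have hp17 : p ≠ 17 := hne_mem hp h17S
              exact prime_ge_19 (hpr p hp) (by omega)
            · intro p hp hpF
              simp only [mem_insert, mem_singleton, not_or] at hpF
              obtain ⟨a2, a3, a5, a13⟩ := hpF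
              exact le_of_eq (uu_eq_t a2 a3 a5 (hne_mem hp h7S) (hne_mem hp h11S) a13)
            · rw [hk6]
              norm_num [prod_insert, mem_insert, mem_singleton, card_insert_of_notMem,
                card_singleton, uu]
        · -- leaf 3e
          apply g_leaf hN1 0.45813 17 {2, 3, 5} (by norm_num) (by norm_num) (by norm_num)
            htail17 ?_ (by intro p hp; fin_cases hp <;> norm_num [uu]) ?_
          · intro p hp hpF
            simp only [mem_insert, mem_singleton, not_or] at hpF
            obtain ⟨a2, a3, a5⟩ := hpF
            exact le_of_eq (uu_eq_t a2 a3 a5 (hne_mem hp h7S) (hne_mem hp h11S)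
              (hne_mem hp h13S))
          · rw [hk6]
            norm_num [prod_insert, mem_insert, mem_singleton, card_insert_of_notMem,
              card_singleton, uu]
    · -- 5 ∉ S
      by_cases h7S : 7 ∈ N.primeFactors
      · by_cases h11S : 11 ∈ N.primeFactors
        · by_cases h13S : 13 ∈ N.primeFactors
          · -- leaf 3f
            have hKS : ({2,3,7,11,13} : Finset ℕ) ⊆ N.primeFactors := by
              intro p hp; fin_cases hp <;> assumption
            have hcardE : (N.primeFactors \ {2,3,7,11,13}).card = 1 := by
              rw [card_sdiff_of_subset hKS, hk6]; norm_num
            obtain ⟨p0, hp0⟩ := card_eq_one.mp hcardE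
            have hp0mem : p0 ∈ N.primeFactors \ {2,3,7,11,13} := by rw [hp0]; simp
            rw [mem_sdiff] at hp0mem
            obtain ⟨hp0S, hp0K⟩ := hp0mem
            simp only [mem_insert, mem_singleton, not_or] at hp0K
            obtain ⟨b2, b3, b7, b11, b13⟩ := hp0K
            have hp017 : 17 ≤ p0 := prime_ge_17 (hpr p0 hp0S) b2 b3 (hne_mem hp0S h5S) b7 b11 b13
            by_cases hp71 : p0 ≤ 71
            · -- P-route
              apply p_master hN (B := (142/72) * (1001/84)) ?_ (by norm_num)
              rw [← prod_sdiff hKS, hp0, prod_singleton]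
              have hfp0 : frac p0 ≤ 142/72 := by
                unfold frac
                rw [div_le_iff₀ (by positivity)]
                have : (p0:ℝ) ≤ 71 := by exact_mod_cast hp71
                linarith
              have hK : ∏ p ∈ ({2,3,7,11,13}:Finset ℕ), frac p = 1001/84 := by
                norm_num [prod_insert, mem_insert, mem_singleton, frac]
              rw [hK]
              exact mul_le_mul_of_nonneg_right hfp0 (by norm_num)
            · -- g-route with tail 0.23094, m = 73
              have hp073 : 73 ≤ p0 := prime_ge_73 (hpr p0 hp0S) (by omega)
              apply g_leaf hN1 0.23094 73 {2, 3, 7, 11, 13} (by norm_num) (by norm_num)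
                (by norm_num) ?_ ?_ (by intro p hp; fin_cases hp <;> norm_num [uu]) ?_
              · intro p hp a2 a3 a5 a7 a11 a13
                have hpE : p ∈ N.primeFactors \ ({2,3,7,11,13}:Finset ℕ) := by
                  rw [mem_sdiff]
                  refine ⟨hp, ?_⟩
                  simp only [mem_insert, mem_singleton, not_or]
                  exact ⟨a2, a3, a7, a11, a13⟩
                rw [hp0, mem_singleton] at hpE
                omega
              · intro p hp hpF
                simp only [mem_insert, mem_singleton, not_or] at hpF
                obtain ⟨a2, a3, a7, a11, a13⟩ := hpF
                exact le_of_eq (uu_eq_t a2 a3 (hne_mem hp h5S) a7 a11 a13)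
              · rw [hk6]
                norm_num [prod_insert, mem_insert, mem_singleton, card_insert_of_notMem,
                  card_singleton, uu]
          · -- leaf 3g : pair (17, 19)
            have hKS : ({2,3,7,11} : Finset ℕ) ⊆ N.primeFactors := by
              intro p hp; fin_cases hp <;> assumption
            apply pair_leaf hN1 {2,3,7,11} hKS (m1 := 17) (m2 := 19)
              (γa := 0.45813) (γb := 0.43589)
              ?_ ?_ (fun r hr h => prime_ge_19 hr (by omega)) (by norm_num) (by norm_num)
              (by norm_num) (by norm_num) (by norm_num) (by norm_num) ?_ ?_
            · rw [card_sdiff_of_subset hKS, hk6]; norm_num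
            · intro r hr
              rw [mem_sdiff] at hr
              obtain ⟨hrS, hrK⟩ := hr
              simp only [mem_insert, mem_singleton, not_or] at hrK
              obtain ⟨a2, a3, a7, a11⟩ := hrK
              have hrp := hpr r hrS
              exact ⟨hrp, prime_ge_17 hrp a2 a3 (hne_mem hrS h5S) a7 a11 (hne_mem hrS h13S)⟩
            · exact pointwise_uu (by intro p hp; fin_cases hp <;> norm_num) (by norm_num)
                (by norm_num : 1 ≤ 17) (by norm_num) (by intro p hp _ _ _ _ _ _; fin_cases hp <;> omega)
            · norm_num [prod_insert, mem_insert, mem_singleton, uu]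
        · -- leaf 3h
          apply g_leaf hN1 0.45813 17 {2, 3, 7, 13} (by norm_num) (by norm_num) (by norm_num)
            htail17 ?_ (by intro p hp; fin_cases hp <;> norm_num [uu]) ?_
          · intro p hp hpF
            simp only [mem_insert, mem_singleton, not_or] at hpF
            obtain ⟨a2, a3, a7, a13⟩ := hpF
            exact le_of_eq (uu_eq_t a2 a3 (hne_mem hp h5S) a7 (hne_mem hp h11S) a13)
          · rw [hk6]
            norm_num [prod_insert, mem_insert, mem_singleton, card_insert_of_notMem,
              card_singleton, uu]
      · -- leaf 3i
        apply g_leaf hN1 0.45813 17 {2, 3, 11, 13} (by norm_num) (by norm_num) (by norm_num)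
          htail17 ?_ (by intro p hp; fin_cases hp <;> norm_num [uu]) ?_
        · intro p hp hpF
          simp only [mem_insert, mem_singleton, not_or] at hpF
          obtain ⟨a2, a3, a11, a13⟩ := hpF
          exact le_of_eq (uu_eq_t a2 a3 (hne_mem hp h5S) (hne_mem hp h7S) a11 a13)
        · rw [hk6]
          norm_num [prod_insert, mem_insert, mem_singleton, card_insert_of_notMem,
            card_singleton, uu]

/-- For every natural number `N ≥ 150000`, `2^{ω(N)} · √N ≤ 0.0607 · ψ(N)`, where `ω(N)` is
the number of distinct prime divisors of `N` and `ψ(N) = N · ∏_{p ∣ N} (1 + 1/p)`. -/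
theorem two_pow_omega_mul_sqrt_le (N : ℕ) (hN : 150000 ≤ N) :
    (2 : ℝ) ^ N.primeFactors.card * Real.sqrt N
      ≤ 0.0607 * ((N : ℝ) * ∏ p ∈ N.primeFactors, (1 + 1 / (p : ℝ))) := by
  have hpr : ∀ p ∈ N.primeFactors, p.Prime := fun p hp => Nat.prime_of_mem_primeFactors hp
  have hkey : ∏ p ∈ N.primeFactors, frac p ≤ 0.0607 * Real.sqrt N := key hN
  have hpos : (0:ℝ) < ∏ p ∈ N.primeFactors, (1 + 1/(p:ℝ)) := by
    apply prod_pos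
    intro p hp
    have : (0:ℝ) < (p:ℝ) := by exact_mod_cast (hpr p hp).pos
    positivity
  have hid : (∏ p ∈ N.primeFactors, (1 + 1/(p:ℝ))) * (∏ p ∈ N.primeFactors, frac p)
      = 2 ^ N.primeFactors.card := by
    rw [← prod_mul_distrib,
      show ((2:ℝ) ^ N.primeFactors.card) = ∏ _p ∈ N.primeFactors, (2:ℝ) from
        (prod_const 2).symm]
    apply prod_congr rfl
    intro p hp
    have hp0 : (0:ℝ) < p := by exact_mod_cast (hpr p hp).pos
    unfold frac
    field_simp
  have hsq : Real.sqrt N * Real.sqrt N = (N:ℝ) := Real.mul_self_sqrt (Nat.cast_nonneg N)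
  have hs0 : 0 ≤ Real.sqrt N := Real.sqrt_nonneg N
  have hmain : (∏ p ∈ N.primeFactors, frac p) * Real.sqrt N
      ≤ 0.0607 * Real.sqrt N * Real.sqrt N :=
    mul_le_mul_of_nonneg_right hkey hs0
  calc (2:ℝ) ^ N.primeFactors.card * Real.sqrt N
      = (∏ p ∈ N.primeFactors, (1 + 1/(p:ℝ))) *
        ((∏ p ∈ N.primeFactors, frac p) * Real.sqrt N) := by rw [← hid]; ring
    _ ≤ (∏ p ∈ N.primeFactors, (1 + 1/(p:ℝ))) * (0.0607 * Real.sqrt N * Real.sqrt N) :=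
        mul_le_mul_of_nonneg_left hmain hpos.le
    _ = (∏ p ∈ N.primeFactors, (1 + 1/(p:ℝ))) * (0.0607 * (N:ℝ)) := by
        rw [mul_assoc 0.0607, hsq]
    _ = 0.0607 * ((N : ℝ) * ∏ p ∈ N.primeFactors, (1 + 1 / (p : ℝ))) := by ring
end

section
/- For every natural number N ≥ 150000, one has 14 · 2^{ω(N)} + (1/2) · 2^{ω(N)} · √N < ψ(N) / 24, where ω(N) is the number of distinct prime divisors of N and ψ(N) = N · ∏_{p | N, p prime} (1 + 1/p). (This is the key inequality showing that the trace of the normalized Hecke operator T'_4 on S_k(Γ_0(N)) is positive for all N ≥ 150000 and even k ≥ 2.) -/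
open Real

private lemma prime_ge_eleven {p : ℕ} (hp : p.Prime) (h2 : p ≠ 2) (h3 : p ≠ 3)
    (h5 : p ≠ 5) (h7 : p ≠ 7) : 11 ≤ p := by
  by_contra h
  push_neg at h
  interval_cases p <;> simp_all (config := {decide := true})

private lemma prime_ge_thirteen {p : ℕ} (hp : p.Prime) (h2 : p ≠ 2) (h3 : p ≠ 3)
    (h5 : p ≠ 5) (h7 : p ≠ 7) (h11 : p ≠ 11) : 13 ≤ p := by
  by_contra h
  push_neg at h
  interval_cases p <;> simp_all (config := {decide := true})

private lemma lt_of_sq_lt_sq {a b : ℝ} (ha : 0 ≤ a) (hb : 0 ≤ b) (h : a ^ 2 < b ^ 2) :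
    a < b := by nlinarith

set_option maxHeartbeats 1000000 in
/-- For every natural number `N ≥ 150000`,
`14 · 2^{ω(N)} + (1/2) · 2^{ω(N)} · √N < ψ(N) / 24`, where `ω(N)` is the number of
distinct prime divisors of `N` and `ψ(N) = N · ∏_{p ∣ N} (1 + 1/p)`. -/
theorem trace_T4_key_inequality (N : ℕ) (hN : 150000 ≤ N) :
    14 * (2 : ℝ) ^ N.primeFactors.card
        + (1 / 2) * (2 : ℝ) ^ N.primeFactors.card * Real.sqrt N
      < ((N : ℝ) * ∏ p ∈ N.primeFactors, (1 + 1 / (p : ℝ))) / 24 := by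
  have hN0 : N ≠ 0 := by omega
  have hNR : (150000 : ℝ) ≤ (N : ℝ) := by exact_mod_cast hN
  set S := N.primeFactors with hSdef
  set ω := S.card with hωdef
  set P : ℝ := ∏ p ∈ S, (1 + 1 / (p : ℝ)) with hPdef
  have hprime : ∀ p ∈ S, Nat.Prime p := fun p hp => Nat.prime_of_mem_primeFactors hp
  have hp2 : ∀ p ∈ S, (2 : ℝ) ≤ (p : ℝ) := fun p hp => by
    exact_mod_cast (hprime p hp).two_le
  have hfac1 : ∀ p ∈ S, 1 ≤ N.factorization p := fun p hp =>
    (hprime p hp).factorization_pos_of_dvd hN0 (Nat.dvd_of_mem_primeFactors hp)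
  -- N as a product of prime powers (in ℝ)
  have hNnat : ∏ p ∈ S, p ^ N.factorization p = N := by
    rw [hSdef, ← Nat.support_factorization]
    exact Nat.factorization_prod_pow_eq_self hN0
  have hNprod : ((N : ℝ)) = ∏ p ∈ S, (p : ℝ) ^ N.factorization p := by
    have := congrArg (fun n : ℕ => (n : ℝ)) hNnat
    push_cast at this
    exact this.symm
  -- the per-prime factors
  set u : ℕ → ℝ := fun p => (1 + 1 / (p : ℝ)) ^ 2 / 4 with hudef
  set g : ℕ → ℝ := fun p => (p : ℝ) ^ N.factorization p * u p with hgdef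
  have hu_pos : ∀ p ∈ S, 0 < u p := by
    intro p hp
    have h2 := hp2 p hp
    have h0 : (0:ℝ) < 1 + 1/(p:ℝ) := by positivity
    simp only [hudef]; positivity
  have hg_pos : ∀ p ∈ S, 0 < g p := by
    intro p hp
    have h2 := hp2 p hp
    have := hu_pos p hp
    have hppos : (0:ℝ) < (p:ℝ) := by linarith
    simp only [hgdef]
    positivity
  have hprodg_pos : 0 < ∏ p ∈ S, g p := Finset.prod_pos hg_pos
  -- g p ≥ p * u p
  have hg_ge : ∀ p ∈ S, (p : ℝ) * u p ≤ g p := by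
    intro p hp
    have h2 := hp2 p hp
    have hu := (hu_pos p hp).le
    have hle : (p : ℝ) ≤ (p : ℝ) ^ N.factorization p := by
      calc (p:ℝ) = (p:ℝ) ^ 1 := (pow_one _).symm
      _ ≤ (p:ℝ) ^ N.factorization p :=
        pow_le_pow_right₀ (by linarith) (hfac1 p hp)
    simpa [hgdef] using mul_le_mul_of_nonneg_right hle hu
  -- product identity : N * P^2 = 4^ω * ∏ g
  have hNP2 : (N : ℝ) * P ^ 2 = 4 ^ ω * ∏ p ∈ S, g p := by
    have h1 : ∏ p ∈ S, g p = (∏ p ∈ S, (p:ℝ) ^ N.factorization p) * ∏ p ∈ S, u p := by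
      rw [← Finset.prod_mul_distrib]
    have h2 : ∏ p ∈ S, u p = (∏ p ∈ S, (1 + 1/(p:ℝ)) ^ 2) / 4 ^ ω := by
      rw [hudef, Finset.prod_div_distrib, Finset.prod_const, hωdef]
    have h3 : ∏ p ∈ S, (1 + 1/(p:ℝ)) ^ 2 = P ^ 2 := by
      rw [hPdef, Finset.prod_pow]
    have h4 : (4:ℝ) ^ ω ≠ 0 := by positivity
    rw [h1, h2, h3, ← hNprod]
    field_simp
  -- ====== MASTER : 166 ≤ ∏ g ======
  have master : (166 : ℝ) ≤ ∏ p ∈ S, g p := by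
    by_cases hB : 2 ∈ S ∧ 3 ∈ S ∧ 5 ∈ S ∧ 7 ∈ S
    · -- Case B : 2,3,5,7 all divide N
      obtain ⟨m2, m3, m5, m7⟩ := hB
      have hTsub : ({2, 3, 5, 7} : Finset ℕ) ⊆ S := by
        intro x hx
        simp only [Finset.mem_insert, Finset.mem_singleton] at hx
        rcases hx with rfl | rfl | rfl | rfl <;> assumption
      have hsplit : (∏ p ∈ S \ {2,3,5,7}, g p) * ∏ p ∈ ({2,3,5,7} : Finset ℕ), g p
          = ∏ p ∈ S, g p := Finset.prod_sdiff hTsub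
      have hT : ∏ p ∈ ({2,3,5,7} : Finset ℕ), g p = g 2 * (g 3 * (g 5 * g 7)) := by
        rw [Finset.prod_insert (by decide), Finset.prod_insert (by decide),
          Finset.prod_insert (by decide), Finset.prod_singleton]
      have hg2 : (9/8 : ℝ) ≤ g 2 := by
        have h := hg_ge 2 m2; simp only [hudef] at h; norm_num at h; linarith
      have hg3 : (4/3 : ℝ) ≤ g 3 := by
        have h := hg_ge 3 m3; simp only [hudef] at h; norm_num at h; linarith
      have hg5 : (9/5 : ℝ) ≤ g 5 := by
        have h := hg_ge 5 m5; simp only [hudef] at h; norm_num at h; linarith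
      have hg7 : (16/7 : ℝ) ≤ g 7 := by
        have h := hg_ge 7 m7; simp only [hudef] at h; norm_num at h; linarith
      have hTprod : (216/35 : ℝ) ≤ ∏ p ∈ ({2,3,5,7} : Finset ℕ), g p := by
        rw [hT]
        have h2 := hg_pos 2 m2; have h3 := hg_pos 3 m3
        have h5 := hg_pos 5 m5; have h7 := hg_pos 7 m7
        have h57 : (9/5 : ℝ)*(16/7) ≤ g 5 * g 7 :=
          mul_le_mul hg5 hg7 (by norm_num) (by linarith)
        have h357 : (4/3 : ℝ)*((9/5)*(16/7)) ≤ g 3 * (g 5 * g 7) :=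
          mul_le_mul hg3 h57 (by norm_num) (by linarith)
        have h2357 : (9/8 : ℝ)*((4/3)*((9/5)*(16/7))) ≤ g 2 * (g 3 * (g 5 * g 7)) :=
          mul_le_mul hg2 h357 (by norm_num) (by linarith)
        linarith
      by_cases hk : 3 ≤ (S \ {2,3,5,7}).card
      · -- many extra primes : use N ≥ rad N
        have hrest : ∀ p ∈ S \ ({2,3,5,7} : Finset ℕ), (36/11 : ℝ) ≤ g p := by
          intro p hp
          rw [Finset.mem_sdiff] at hp
          obtain ⟨hpS, hpT⟩ := hp
          simp only [Finset.mem_insert, Finset.mem_singleton] at hpT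
          push_neg at hpT
          have h11 : (11 : ℕ) ≤ p :=
            prime_ge_eleven (hprime p hpS) hpT.1 hpT.2.1 hpT.2.2.1 hpT.2.2.2
          have h11R : (11 : ℝ) ≤ (p : ℝ) := by exact_mod_cast h11
          have hppos : (0:ℝ) < (p:ℝ) := by linarith
          have hform : (p : ℝ) * u p = ((p:ℝ) + 1)^2 / (4 * p) := by
            simp only [hudef]; field_simp
          have hc : (36/11 : ℝ) ≤ (p : ℝ) * u p := by
            rw [hform, le_div_iff₀ (by positivity)]
            nlinarith
          linarith [hg_ge p hpS]
        have hrestprod : (36/11 : ℝ)^3 ≤ ∏ p ∈ S \ {2,3,5,7}, g p := by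
          calc (36/11 : ℝ)^3 ≤ (36/11 : ℝ)^(S \ {2,3,5,7}).card :=
              pow_le_pow_right₀ (by norm_num) hk
          _ = ∏ _p ∈ S \ {2,3,5,7}, (36/11 : ℝ) := (Finset.prod_const _).symm
          _ ≤ ∏ p ∈ S \ {2,3,5,7}, g p :=
              Finset.prod_le_prod (fun i _ => by norm_num) hrest
        calc (166 : ℝ) ≤ (36/11)^3 * (216/35) := by norm_num
        _ ≤ (∏ p ∈ S \ {2,3,5,7}, g p) * ∏ p ∈ ({2,3,5,7} : Finset ℕ), g p := by
            apply mul_le_mul hrestprod hTprod (by norm_num)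
            exact le_trans (by norm_num) hrestprod
        _ = ∏ p ∈ S, g p := hsplit
      · -- few extra primes : use N ≥ 150000
        push_neg at hk
        have hgu : ∏ p ∈ S, g p = (N : ℝ) * ∏ p ∈ S, u p := by
          rw [hgdef, Finset.prod_mul_distrib, ← hNprod]
        have husplit : (∏ p ∈ S \ {2,3,5,7}, u p) * ∏ p ∈ ({2,3,5,7} : Finset ℕ), u p
            = ∏ p ∈ S, u p := Finset.prod_sdiff hTsub
        have huT : ∏ p ∈ ({2,3,5,7} : Finset ℕ), u p = 36/1225 := by
          rw [Finset.prod_insert (by decide), Finset.prod_insert (by decide),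
            Finset.prod_insert (by decide), Finset.prod_singleton]
          simp only [hudef]; norm_num
        have hurest : (1/16 : ℝ) ≤ ∏ p ∈ S \ {2,3,5,7}, u p := by
          have h14 : ∀ p ∈ S \ ({2,3,5,7} : Finset ℕ), (1/4 : ℝ) ≤ u p := by
            intro p hp
            have hpS := (Finset.mem_sdiff.mp hp).1
            have h2 := hp2 p hpS
            have hppos : (0:ℝ) < (p:ℝ) := by linarith
            have h1 : (1:ℝ) ≤ 1 + 1/(p:ℝ) := by
              have : (0:ℝ) ≤ 1/(p:ℝ) := by positivity
              linarith
            simp only [hudef]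
            nlinarith
          have hcard2 : (S \ {2,3,5,7}).card ≤ 2 := by omega
          have hpow : (1/16 : ℝ) ≤ (1/4 : ℝ) ^ (S \ {2,3,5,7}).card := by
            calc (1/16 : ℝ) = (1/4)^2 := by norm_num
            _ ≤ (1/4 : ℝ) ^ (S \ {2,3,5,7}).card :=
              pow_le_pow_of_le_one (by norm_num) (by norm_num) hcard2
          calc (1/16 : ℝ) ≤ (1/4 : ℝ) ^ (S \ {2,3,5,7}).card := hpow
          _ = ∏ _p ∈ S \ {2,3,5,7}, (1/4 : ℝ) := (Finset.prod_const _).symm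
          _ ≤ ∏ p ∈ S \ {2,3,5,7}, u p :=
              Finset.prod_le_prod (fun i _ => by norm_num) h14
        rw [hgu, ← husplit, huT]
        have hstep : (1/16 : ℝ)*(36/1225) ≤ (∏ p ∈ S \ {2,3,5,7}, u p) * (36/1225) :=
          mul_le_mul_of_nonneg_right hurest (by norm_num)
        have hfin := mul_le_mul hNR hstep (by norm_num) (by linarith)
        calc (166:ℝ) ≤ 150000 * ((1/16 : ℝ)*(36/1225)) := by norm_num
        _ ≤ (N:ℝ) * ((∏ p ∈ S \ {2,3,5,7}, u p) * (36/1225)) := hfin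
    · -- Case A : one of 2,3,5,7 does not divide N. Work with squares.
      set e : ℕ → ℝ := fun p => (p : ℝ) * u p ^ 2 with hedef
      have he2 : e 2 = 81/128 := by simp only [hedef, hudef]; norm_num
      have he3 : e 3 = 16/27 := by simp only [hedef, hudef]; norm_num
      have he5 : e 5 = 81/125 := by simp only [hedef, hudef]; norm_num
      have he7 : e 7 = 256/343 := by simp only [hedef, hudef]; norm_num
      have he11 : e 11 = 1296/1331 := by simp only [hedef, hudef]; norm_num
      -- pointwise bound
      have hpt : ∀ p ∈ S, (if p ∈ ({2,3,5,7,11} : Finset ℕ) then e p else 1)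
          ≤ (p : ℝ) ^ N.factorization p * u p ^ 2 := by
        intro p hp
        have h2 := hp2 p hp
        have hu := hu_pos p hp
        have hpa : (p : ℝ) ≤ (p : ℝ) ^ N.factorization p := by
          calc (p:ℝ) = (p:ℝ) ^ 1 := (pow_one _).symm
          _ ≤ (p:ℝ) ^ N.factorization p :=
            pow_le_pow_right₀ (by linarith) (hfac1 p hp)
        have hkey : e p ≤ (p : ℝ) ^ N.factorization p * u p ^ 2 := by
          simp only [hedef]
          exact mul_le_mul_of_nonneg_right hpa (by positivity)
        by_cases hpV : p ∈ ({2,3,5,7,11} : Finset ℕ)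
        · simpa [hpV] using hkey
        · simp only [hpV, if_false]
          simp only [Finset.mem_insert, Finset.mem_singleton] at hpV
          push_neg at hpV
          have h13 : (13 : ℕ) ≤ p := prime_ge_thirteen (hprime p hp)
            hpV.1 hpV.2.1 hpV.2.2.1 hpV.2.2.2.1 hpV.2.2.2.2
          have h13R : (13 : ℝ) ≤ (p : ℝ) := by exact_mod_cast h13
          have hppos : (0:ℝ) < (p:ℝ) := by linarith
          have h1 : (1 : ℝ) ≤ e p := by
            simp only [hedef, hudef]
            have hform : (p : ℝ) * ((1 + 1/(p:ℝ))^2/4)^2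
                = ((p:ℝ)^4 + 4*(p:ℝ)^3 + 6*(p:ℝ)^2 + 4*(p:ℝ) + 1) / (16 * (p:ℝ)^3) := by
              field_simp; ring
            have hcube : (0:ℝ) ≤ (p:ℝ)^3 := by positivity
            have h4 : 13*(p:ℝ)^3 ≤ (p:ℝ)^4 := by
              have := mul_le_mul_of_nonneg_right h13R hcube
              calc 13*(p:ℝ)^3 ≤ (p:ℝ)*(p:ℝ)^3 := this
              _ = (p:ℝ)^4 := by ring
            rw [hform, le_div_iff₀ (by positivity)]
            nlinarith [sq_nonneg ((p:ℝ)), hppos.le, hcube, h4]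
          linarith [hkey]
      -- assemble the square bound
      have hsq_id : (∏ p ∈ S, g p) ^ 2
          = (N : ℝ) * ∏ p ∈ S, ((p : ℝ) ^ N.factorization p * u p ^ 2) := by
        rw [← Finset.prod_pow, hNprod, ← Finset.prod_mul_distrib]
        apply Finset.prod_congr rfl
        intro p hp
        simp only [hgdef]
        ring
      have hVbound : (∏ p ∈ S, (if p ∈ ({2,3,5,7,11} : Finset ℕ) then e p else 1))
          ≤ (∏ p ∈ S, ((p : ℝ) ^ N.factorization p * u p ^ 2)) := by
        apply Finset.prod_le_prod _ hpt
        intro p hp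
        by_cases hpV : p ∈ ({2,3,5,7,11} : Finset ℕ)
        · have := hu_pos p hp; have h2 := hp2 p hp
          have hppos : (0:ℝ) < (p:ℝ) := by linarith
          simp only [hpV, if_true, hedef]
          positivity
        · simp only [hpV, if_false]; norm_num
      have hite : ∏ p ∈ S, (if p ∈ ({2,3,5,7,11} : Finset ℕ) then e p else 1)
          = ∏ p ∈ S ∩ {2,3,5,7,11}, e p :=
        Finset.prod_ite_mem S {2,3,5,7,11} e
      have he_le_one : ∀ p ∈ ({2,3,5,7,11} : Finset ℕ), e p ≤ 1 := by
        intro p hp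
        fin_cases hp
        · rw [he2]; norm_num
        · rw [he3]; norm_num
        · rw [he5]; norm_num
        · rw [he7]; norm_num
        · rw [he11]; norm_num
      have he_nonneg : ∀ p ∈ ({2,3,5,7,11} : Finset ℕ), 0 ≤ e p := by
        intro p hp
        fin_cases hp
        · rw [he2]; norm_num
        · rw [he3]; norm_num
        · rw [he5]; norm_num
        · rw [he7]; norm_num
        · rw [he11]; norm_num
      have hmain : (166:ℝ)^2 ≤ (∏ p ∈ S, g p)^2 := by
        push_neg at hB
        have hq : ∃ q ∈ ({2,3,5,7} : Finset ℕ), q ∉ S ∧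
            (166:ℝ)^2 ≤ (150000 : ℝ) * (∏ p ∈ ({2,3,5,7,11} : Finset ℕ).erase q, e p) := by
          by_cases h2' : 2 ∈ S
          · by_cases h3' : 3 ∈ S
            · by_cases h5' : 5 ∈ S
              · refine ⟨7, by decide, hB h2' h3' h5', ?_⟩
                have hE : (({2,3,5,7,11} : Finset ℕ).erase 7) = ({2,3,5,11} : Finset ℕ) := by
                  decide
                rw [hE, Finset.prod_insert (by decide), Finset.prod_insert (by decide),
                  Finset.prod_insert (by decide), Finset.prod_singleton,
                  he2, he3, he5, he11]
                norm_num
              · refine ⟨5, by decide, h5', ?_⟩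
                have hE : (({2,3,5,7,11} : Finset ℕ).erase 5) = ({2,3,7,11} : Finset ℕ) := by
                  decide
                rw [hE, Finset.prod_insert (by decide), Finset.prod_insert (by decide),
                  Finset.prod_insert (by decide), Finset.prod_singleton,
                  he2, he3, he7, he11]
                norm_num
            · refine ⟨3, by decide, h3', ?_⟩
              have hE : (({2,3,5,7,11} : Finset ℕ).erase 3) = ({2,5,7,11} : Finset ℕ) := by
                decide
              rw [hE, Finset.prod_insert (by decide), Finset.prod_insert (by decide),
                Finset.prod_insert (by decide), Finset.prod_singleton,
                he2, he5, he7, he11]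
              norm_num
          · refine ⟨2, by decide, h2', ?_⟩
            have hE : (({2,3,5,7,11} : Finset ℕ).erase 2) = ({3,5,7,11} : Finset ℕ) := by
              decide
            rw [hE, Finset.prod_insert (by decide), Finset.prod_insert (by decide),
              Finset.prod_insert (by decide), Finset.prod_singleton,
              he3, he5, he7, he11]
            norm_num
        obtain ⟨q, hqV, hqS, hqval⟩ := hq
        have hsub : S ∩ {2,3,5,7,11} ⊆ ({2,3,5,7,11} : Finset ℕ).erase q := by
          intro x hx
          rw [Finset.mem_inter] at hx
          rw [Finset.mem_erase]
          exact ⟨fun h => hqS (h ▸ hx.1), hx.2⟩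
        have hmono : ∏ p ∈ ({2,3,5,7,11} : Finset ℕ).erase q, e p
            ≤ ∏ p ∈ S ∩ {2,3,5,7,11}, e p := by
          have hsd := Finset.prod_sdiff (f := e) hsub
          rw [← hsd]
          have hone : ∏ p ∈ (({2,3,5,7,11} : Finset ℕ).erase q) \ (S ∩ {2,3,5,7,11}), e p ≤ 1 :=
            Finset.prod_le_one
              (fun i hi => he_nonneg i (Finset.mem_of_mem_erase
                ((Finset.mem_sdiff.mp hi).1)))
              (fun i hi => he_le_one i (Finset.mem_of_mem_erase
                ((Finset.mem_sdiff.mp hi).1)))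
          have hpos : 0 ≤ ∏ p ∈ S ∩ {2,3,5,7,11}, e p :=
            Finset.prod_nonneg (fun i hi => he_nonneg i (Finset.mem_inter.mp hi).2)
          nlinarith
        have hVnn : 0 ≤ ∏ p ∈ ({2,3,5,7,11} : Finset ℕ).erase q, e p :=
          Finset.prod_nonneg (fun i hi => he_nonneg i (Finset.mem_of_mem_erase hi))
        calc (166:ℝ)^2 ≤ 150000 * ∏ p ∈ ({2,3,5,7,11} : Finset ℕ).erase q, e p := hqval
        _ ≤ (N:ℝ) * ∏ p ∈ S ∩ {2,3,5,7,11}, e p :=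
            mul_le_mul hNR hmono hVnn (by linarith)
        _ = (N:ℝ) * ∏ p ∈ S, (if p ∈ ({2,3,5,7,11} : Finset ℕ) then e p else 1) := by
            rw [hite]
        _ ≤ (N:ℝ) * ∏ p ∈ S, ((p : ℝ) ^ N.factorization p * u p ^ 2) :=
            mul_le_mul_of_nonneg_left hVbound (by linarith)
        _ = (∏ p ∈ S, g p)^2 := hsq_id.symm
      nlinarith [hprodg_pos]
  -- ====== FINISH ======
  set s : ℝ := Real.sqrt N with hsdef
  have hs_nonneg : 0 ≤ s := Real.sqrt_nonneg _
  have hs_sq : s ^ 2 = (N : ℝ) := Real.sq_sqrt (by positivity)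
  have hs387 : (387 : ℝ) ≤ s := by nlinarith
  have hP1 : (1 : ℝ) ≤ P := by
    rw [hPdef]
    calc (1:ℝ) = ∏ _p ∈ S, (1:ℝ) := by rw [Finset.prod_const, one_pow]
    _ ≤ ∏ p ∈ S, (1 + 1/(p:ℝ)) := by
        apply Finset.prod_le_prod (fun i _ => by norm_num)
        intro p hp
        have h2 := hp2 p hp
        have hppos : (0:ℝ) < (p:ℝ) := by linarith
        have h0 : (0:ℝ) ≤ 1/(p:ℝ) := by positivity
        linarith
  have hNpos : (0:ℝ) < (N:ℝ) := by linarith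
  have hkey : (2:ℝ) ^ ω * (336 + 12 * s) < (N : ℝ) * P := by
    apply lt_of_sq_lt_sq (by positivity) (by positivity)
    have h1 : ((2:ℝ) ^ ω * (336 + 12 * s)) ^ 2 = 4 ^ ω * (336 + 12 * s)^2 := by
      rw [mul_pow, ← pow_mul, mul_comm ω 2, pow_mul]
      norm_num
    have h2 : (336 + 12 * s)^2 < 166 * (N:ℝ) := by
      nlinarith [sq_nonneg (s - 387)]
    have h3 : (4:ℝ) ^ ω * (166 * (N:ℝ)) ≤ ((N:ℝ) * P)^2 := by
      have h4 : (166:ℝ) * 4^ω ≤ (N:ℝ) * P^2 := by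
        rw [hNP2]
        nlinarith [pow_pos (show (0:ℝ) < 4 by norm_num) ω]
      calc (4:ℝ) ^ ω * (166 * (N:ℝ)) = (166 * 4^ω) * (N:ℝ) := by ring
      _ ≤ ((N:ℝ) * P^2) * (N:ℝ) := mul_le_mul_of_nonneg_right h4 (by linarith)
      _ = ((N:ℝ) * P)^2 := by ring
    calc ((2:ℝ) ^ ω * (336 + 12 * s)) ^ 2 = 4 ^ ω * (336 + 12 * s)^2 := h1
    _ < 4 ^ ω * (166 * (N:ℝ)) := by
        apply mul_lt_mul_of_pos_left h2 (by positivity)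
    _ ≤ ((N:ℝ) * P)^2 := h3
  have hring : 14 * (2:ℝ)^ω + (1/2) * (2:ℝ)^ω * s = (2:ℝ)^ω * (336 + 12*s) / 24 := by
    ring
  rw [hring]
  linarith
end
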